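/- arXiv:2405.11652 — 9 statements merged into one kernel-verified Lean document; each statement's English description precedes it below -/
import Mathlib

section
/- If H is a K-P_t-subnormal subgroup of a finite group G and N is a normal subgroup of G, then H ∩ N is K-P_t-subnormal in N. -/
/-- One step of a `K`-`ℙ_t`-subnormal chain: `A ≤ B` and either `A` is normal in `B`,
or the index `|B : A|` is a prime `p` such that `p - 1` is not divisible by the
`(t+1)`-th power of any prime. -/
def KPtStep (t : ℕ) {G : Type*} [Group G] (A B : Subgroup G) : Prop :=
  A ≤ B ∧ ((A.subgroupOf B).Normal ∨
    ∃ p : ℕ, p.Prime ∧ A.relIndex B = p ∧ ∀ q : ℕ, q.Prime → ¬ q ^ (t + 1) ∣ (p - 1))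

/-- `H` is `K`-`ℙ_t`-subnormal in `G` if there is a chain
`H = H₀ ≤ H₁ ≤ ⋯ ≤ Hₙ = G` each step of which is a `KPtStep`. -/
def KPtSubnormal (t : ℕ) {G : Type*} [Group G] (H : Subgroup G) : Prop :=
  Relation.ReflTransGen (KPtStep t) H ⊤

/-- If `m` is normal, `|m : a ⊓ m| = |a ⊔ m : a|`, so it divides the index of `a`. -/
lemma inf_relindex_dvd_index {Γ : Type*} [Group Γ] [Finite Γ] (a m : Subgroup Γ)
    [m.Normal] : (a ⊓ m).relIndex m ∣ a.index := by
  set s : Subgroup Γ := a ⊔ m with hs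
  have h2 : (a ⊓ m).relIndex m * m.relIndex s = (a ⊓ m).relIndex s :=
    Subgroup.relIndex_mul_relIndex _ _ _ inf_le_right le_sup_right
  have h3 : m.relIndex s = (a ⊓ m).relIndex a := by
    rw [hs, Subgroup.relIndex_sup_right, ← Subgroup.inf_relIndex_right m a, inf_comm]
  have h1 : (a ⊓ m).relIndex a * a.relIndex s = (a ⊓ m).relIndex s :=
    Subgroup.relIndex_mul_relIndex _ _ _ inf_le_left le_sup_left
  have hpos : (a ⊓ m).relIndex a ≠ 0 := Subgroup.FiniteIndex.index_ne_zero
  have key : (a ⊓ m).relIndex m = a.relIndex s := by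
    have := h2.trans h1.symm
    rw [h3] at this
    exact Nat.eq_of_mul_eq_mul_left (Nat.pos_of_ne_zero hpos)
      (by rw [mul_comm ((a ⊓ m).relIndex a)]; exact this)
  rw [key]
  exact Subgroup.relIndex_dvd_index_of_le le_sup_left

lemma relindex_inf_dvd {G : Type*} [Group G] [Finite G] (A B N : Subgroup G) [N.Normal]
    (hAB : A ≤ B) : (A ⊓ N).relIndex (B ⊓ N) ∣ A.relIndex B := by
  have hBN : B ⊓ N ≤ B := inf_le_left
  rw [← Subgroup.relIndex_subgroupOf hBN]
  have e1 : (A ⊓ N).subgroupOf B = A.subgroupOf B ⊓ N.subgroupOf B := by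
    simp only [Subgroup.subgroupOf, Subgroup.comap_inf]
  rw [e1, Subgroup.inf_subgroupOf_left]
  exact inf_relindex_dvd_index (A.subgroupOf B) (N.subgroupOf B)

theorem stmt_2 {G : Type*} [Group G] [Finite G] (t : ℕ) (ht : 1 ≤ t)
    (H N : Subgroup G) [N.Normal] (hH : KPtSubnormal t H) :
    KPtSubnormal t ((H ⊓ N).subgroupOf N) := by
  have key : Relation.ReflTransGen (KPtStep t)
      ((H ⊓ N).subgroupOf N) ((⊤ ⊓ N).subgroupOf N) := by
    refine Relation.ReflTransGen.lift' (fun A : Subgroup G => (A ⊓ N).subgroupOf N) ?_ _ _ hH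
    rintro A B ⟨hAB, hstep⟩
    have hle : (A ⊓ N).subgroupOf N ≤ (B ⊓ N).subgroupOf N :=
      Subgroup.comap_mono (inf_le_inf_right N hAB)
    rcases hstep with hnorm | ⟨p, hp, hrel, hq⟩
    · -- normal case: one normal step
      refine Relation.ReflTransGen.single ⟨hle, Or.inl ?_⟩
      rw [Subgroup.normal_subgroupOf_iff hle]
      intro h k hh hk
      rw [Subgroup.mem_subgroupOf] at hh hk ⊢
      obtain ⟨hhA, hhN⟩ := Subgroup.mem_inf.mp hh
      obtain ⟨hkB, hkN⟩ := Subgroup.mem_inf.mp hk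
      refine Subgroup.mem_inf.mpr ⟨?_, N.mul_mem (N.mul_mem hkN hhN) (N.inv_mem hkN)⟩
      have := (Subgroup.normal_subgroupOf_iff hAB).mp hnorm (↑(h : ↥N)) (↑(k : ↥N)) hhA hkB
      simpa using this
    · -- prime index case
      have hdvd : ((A ⊓ N).subgroupOf N).relIndex ((B ⊓ N).subgroupOf N) ∣ p := by
        rw [Subgroup.relIndex_subgroupOf inf_le_right, ← hrel]
        exact relindex_inf_dvd A B N hAB
      rcases (Nat.Prime.eq_one_or_self_of_dvd hp _ hdvd) with h1 | hps
      · -- index 1: the two subgroups coincide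
        have h2 : (B ⊓ N).subgroupOf N ≤ (A ⊓ N).subgroupOf N :=
          Subgroup.relIndex_eq_one.mp h1
        show Relation.ReflTransGen (KPtStep t) ((A ⊓ N).subgroupOf N) ((B ⊓ N).subgroupOf N)
        rw [le_antisymm hle h2]
      · exact Relation.ReflTransGen.single ⟨hle, Or.inr ⟨p, hp, hps, hq⟩⟩
  simpa [KPtSubnormal] using key
end

section
/- If H is a K-P_t-subnormal subgroup of a finite group G and N is a normal subgroup of G, then HN/N is K-P_t-subnormal in G/N. -/
lemma KPtStep.map {G G' : Type*} [Group G] [Group G'] (f : G →* G') {t : ℕ}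
    {A B : Subgroup G} (h : KPtStep t A B) :
    Relation.ReflTransGen (KPtStep t) (A.map f) (B.map f) := by
  obtain ⟨hAB, hcase⟩ := h
  have hle : A.map f ≤ B.map f := Subgroup.map_mono hAB
  rcases hcase with hn | ⟨p, hp, hrel, hq⟩
  · refine .single ⟨hle, Or.inl ⟨?_⟩⟩
    rintro ⟨x, hxB⟩ hx ⟨y, hyB⟩
    obtain ⟨a, ha, rfl⟩ := hx
    obtain ⟨b, hb, rfl⟩ := hyB
    have : b * a * b⁻¹ ∈ A := hn.conj_mem ⟨a, hAB ha⟩ ha ⟨b, hb⟩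
    exact ⟨b * a * b⁻¹, this, by simp [mul_assoc]⟩
  · have hdvd : (A.map f).relIndex (B.map f) ∣ p := by
      rw [← hrel, ← Subgroup.relIndex_comap]
      exact Subgroup.relIndex_dvd_of_le_left _ (Subgroup.le_comap_map f A)
    rcases (hp.eq_one_or_self_of_dvd _ hdvd) with h1 | hpeq
    · have heq : A.map f = B.map f :=
        le_antisymm hle (Subgroup.relIndex_eq_one.mp h1)
      rw [heq]
    · exact .single ⟨hle, Or.inr ⟨p, hp, hpeq, hq⟩⟩

theorem stmt_3 {G : Type*} [Group G] [Finite G] (t : ℕ) (ht : 1 ≤ t)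
    (H N : Subgroup G) [N.Normal] (hH : KPtSubnormal t H) :
    KPtSubnormal t ((H ⊔ N).map (QuotientGroup.mk' N)) := by
  have hmap : ∀ K L : Subgroup G, Relation.ReflTransGen (KPtStep t) K L →
      Relation.ReflTransGen (KPtStep t) (K.map (QuotientGroup.mk' N))
        (L.map (QuotientGroup.mk' N)) := by
    intro K L hK
    induction hK with
    | refl => exact .refl
    | tail _ hstep ih => exact ih.trans (hstep.map _)
  have htop : ((⊤ : Subgroup G).map (QuotientGroup.mk' N)) = ⊤ := by
    rw [Subgroup.map_top_of_surjective _ (QuotientGroup.mk'_surjective N)]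
  have hsup : (H ⊔ N).map (QuotientGroup.mk' N) = H.map (QuotientGroup.mk' N) := by
    rw [Subgroup.map_sup]
    have hN : N.map (QuotientGroup.mk' N) = ⊥ := by
      rw [eq_bot_iff]
      rintro _ ⟨x, hx, rfl⟩
      simpa using (QuotientGroup.eq_one_iff x).mpr hx
    rw [hN, sup_bot_eq]
  rw [KPtSubnormal, hsup, ← htop]
  exact hmap H ⊤ hH
end

section
/- Let N be a normal subgroup of a finite group G and H a subgroup with N ≤ H. If H/N is K-P_t-subnormal in G/N, then H is K-P_t-subnormal in G. -/
lemma KPtStep_comap {t : ℕ} {G G' : Type*} [Group G] [Group G'] (f : G →* G')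
    (hf : Function.Surjective f) {A B : Subgroup G'} (h : KPtStep t A B) :
    KPtStep t (A.comap f) (B.comap f) := by
  obtain ⟨hle, hstep⟩ := h
  refine ⟨Subgroup.comap_mono hle, ?_⟩
  rcases hstep with hnorm | ⟨p, hp, hrel, hq⟩
  · left
    constructor
    intro n hn g
    simp only [Subgroup.mem_subgroupOf, Subgroup.mem_comap] at hn ⊢
    simpa [Subgroup.mem_subgroupOf] using hnorm.conj_mem ⟨f n, hle hn⟩ (Subgroup.mem_subgroupOf.mpr (by simpa using hn)) ⟨f g, g.2⟩
  · right
    refine ⟨p, hp, ?_, hq⟩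
    rw [Subgroup.relIndex_comap, Subgroup.map_comap_eq_self_of_surjective hf]
    exact hrel

theorem stmt_4 {G : Type*} [Group G] [Finite G] (t : ℕ) (ht : 1 ≤ t)
    (H N : Subgroup G) [N.Normal] (hNH : N ≤ H)
    (h : KPtSubnormal t (H.map (QuotientGroup.mk' N))) :
    KPtSubnormal t H := by
  have key := Relation.ReflTransGen.lift (fun K : Subgroup (G ⧸ N) => K.comap (QuotientGroup.mk' N))
    (fun a b hab => KPtStep_comap (QuotientGroup.mk' N) (QuotientGroup.mk'_surjective N) hab) _ _ h
  simp only [Function.onFun, Subgroup.comap_top] at key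
  rwa [Subgroup.comap_map_eq, QuotientGroup.ker_mk', sup_of_le_left hNH] at key
end

section
/- Let H be a subgroup of a finite group G and N_1, N_2 normal subgroups of G. If HN_1 and HN_2 are both K-P_t-subnormal in G, then HN_1 ∩ HN_2 is K-P_t-subnormal in G. -/
section Aux

open Subgroup

variable {Γ : Type*} [Group Γ]

/-- Dedekind modular law for a normal subgroup. -/
lemma dedekind_mod (H Y N : Subgroup Γ) [N.Normal] (hHY : H ≤ Y) :
    Y ⊓ (H ⊔ N) = H ⊔ (Y ⊓ N) := by
  apply le_antisymm
  · intro y hy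
    rw [Subgroup.mem_inf] at hy
    obtain ⟨hyY, hyHN⟩ := hy
    rw [← SetLike.mem_coe, Subgroup.mul_normal] at hyHN
    obtain ⟨h, hh, n, hn, rfl⟩ := hyHN
    have hhY : h ∈ Y := hHY hh
    have hnY : n ∈ Y := by
      have : h⁻¹ * (h * n) ∈ Y := mul_mem (inv_mem hhY) hyY
      simpa using this
    exact mul_mem (le_sup_left (a := H) (b := Y ⊓ N) hh)
      (le_sup_right (a := H) (b := Y ⊓ N) ⟨hnY, hn⟩)
  · exact sup_le (le_inf hHY le_sup_left)
      (le_inf inf_le_left (inf_le_right.trans le_sup_right))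

/-- Key second-isomorphism computation: with `K` normal and `H ≤ X`,
`|H⊔K : X ∩ (H⊔K)| = |X⊔K : X|`. -/
lemma relindex_sup_eq [Finite Γ] (X H K : Subgroup Γ) [K.Normal] (hHX : H ≤ X) :
    X.relIndex (H ⊔ K) = X.relIndex (X ⊔ K) := by
  set W : Subgroup Γ := H ⊔ K with hW
  set M : Subgroup Γ := X ⊔ K with hM
  have hWM : W ≤ M := sup_le_sup_right hHX K
  -- `relindex W M = relindex W X` via the quotient by `K`.
  have hKW : K ≤ W := le_sup_right
  have hcomap : Subgroup.comap (QuotientGroup.mk' K)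
      (Subgroup.map (QuotientGroup.mk' K) W) = W := by
    rw [Subgroup.comap_map_eq, QuotientGroup.ker_mk']
    exact sup_eq_left.mpr hKW
  have hmapM : Subgroup.map (QuotientGroup.mk' K) M
      = Subgroup.map (QuotientGroup.mk' K) X := by
    rw [hM, Subgroup.map_sup]
    have : Subgroup.map (QuotientGroup.mk' K) K = ⊥ := by
      rw [Subgroup.map_eq_bot_iff, QuotientGroup.ker_mk']
    rw [this, sup_bot_eq]
  have hWMX : W.relIndex M = W.relIndex X := by
    conv_lhs => rw [← hcomap]
    conv_rhs => rw [← hcomap]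
    rw [Subgroup.relIndex_comap, Subgroup.relIndex_comap, hmapM]
  -- two decompositions of `relindex (X ⊓ W) M`
  have a1 : W.relIndex X * X.relIndex M = (W ⊓ X).relIndex M := by
    have := Subgroup.relIndex_inf_mul_relIndex W X M
    rwa [inf_of_le_left (le_sup_left.trans_eq hM.symm : X ≤ M)] at this
  have a2 : (X ⊓ W).relIndex W * W.relIndex M = (X ⊓ W).relIndex M :=
    Subgroup.relIndex_mul_relIndex _ _ _ inf_le_right hWM
  have a3 : (X ⊓ W).relIndex W = X.relIndex W := Subgroup.inf_relIndex_right X W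
  rw [a3, hWMX] at a2
  rw [inf_comm W X] at a1
  -- cancel `W.relIndex X`
  have hfin : W.relIndex X ≠ 0 := Subgroup.index_ne_zero_of_finite
  have : W.relIndex X * X.relIndex M = W.relIndex X * X.relIndex W := by
    rw [a1, ← a2, mul_comm]
  exact (Nat.eq_of_mul_eq_mul_left (Nat.pos_of_ne_zero hfin) this).symm

/-- With `K` normal and `H ≤ X`, the relative index of `X` in `H ⊔ K` divides the index of `X`. -/
lemma relindex_sup_dvd_index [Finite Γ] (X H K : Subgroup Γ) [K.Normal] (hHX : H ≤ X) :
    X.relIndex (H ⊔ K) ∣ X.index := by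
  rw [relindex_sup_eq X H K hHX, ← Subgroup.relIndex_top_right (H := X)]
  exact ⟨_, (Subgroup.relIndex_mul_relIndex X (X ⊔ K) ⊤ le_sup_left le_top).symm⟩

/-- The key divisibility: intersecting a step `X ≤ Y` with `B = H ⊔ N` (with `H ≤ X`
and `N` normal) divides the relative index. -/
lemma relindex_inter_dvd [Finite Γ] (X Y H N : Subgroup Γ) [N.Normal]
    (hHX : H ≤ X) (hXY : X ≤ Y) :
    (X ⊓ (H ⊔ N)).relIndex (Y ⊓ (H ⊔ N)) ∣ X.relIndex Y := by
  set B : Subgroup Γ := H ⊔ N with hB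
  have h1 : X ⊓ B = X ⊓ (Y ⊓ B) := by
    rw [← inf_assoc, inf_of_le_left hXY]
  have h2 : (X ⊓ (Y ⊓ B)).relIndex (Y ⊓ B) = X.relIndex (Y ⊓ B) :=
    Subgroup.inf_relIndex_right X (Y ⊓ B)
  rw [h1, h2]
  -- pass to the ambient group `↥Y`
  have hHY : H ≤ Y := hHX.trans hXY
  have hded : Y ⊓ B = H ⊔ (Y ⊓ N) := dedekind_mod H Y N hHY
  have hYBle : Y ⊓ B ≤ Y := inf_le_left
  rw [← Subgroup.relIndex_subgroupOf (L := Y) hYBle]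
  have hsub : (Y ⊓ B).subgroupOf Y = H.subgroupOf Y ⊔ N.subgroupOf Y := by
    rw [hded, Subgroup.subgroupOf_sup (A := H) (A' := Y ⊓ N) (B := Y) hHY inf_le_left]
    congr 1
    rw [inf_comm, Subgroup.inf_subgroupOf_right]
  rw [hsub]
  have hN' : (N.subgroupOf Y).Normal := Subgroup.Normal.subgroupOf ‹N.Normal› Y
  have hHX' : H.subgroupOf Y ≤ X.subgroupOf Y := fun g hg => hHX hg
  have := relindex_sup_dvd_index (Γ := ↥Y) (X.subgroupOf Y) (H.subgroupOf Y)
    (N.subgroupOf Y) hHX'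
  exact this

/-- Intersecting one `KPtStep` with `H ⊔ N` yields a (possibly trivial) chain. -/
lemma kptStep_inter (t : ℕ) [Finite Γ] (H N : Subgroup Γ) [N.Normal]
    {X Y : Subgroup Γ} (hHX : H ≤ X) (hs : KPtStep t X Y) :
    Relation.ReflTransGen (KPtStep t) (X ⊓ (H ⊔ N)) (Y ⊓ (H ⊔ N)) := by
  obtain ⟨hXY, hcase⟩ := hs
  set B : Subgroup Γ := H ⊔ N with hB
  have hle : X ⊓ B ≤ Y ⊓ B := inf_le_inf_right B hXY
  rcases hcase with hnorm | ⟨p, hp, hrel, hdiv⟩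
  · refine Relation.ReflTransGen.single ⟨hle, Or.inl ?_⟩
    constructor
    intro n hn g
    rw [Subgroup.mem_subgroupOf] at hn ⊢
    have hnX : (n : Γ) ∈ X := hn.1
    have hnB : (n : Γ) ∈ B := hn.2
    have hgY : (g : Γ) ∈ Y := (Subgroup.mem_inf.mp g.2).1
    have hgB : (g : Γ) ∈ B := (Subgroup.mem_inf.mp g.2).2
    have hnY : (n : Γ) ∈ Y := (Subgroup.mem_inf.mp n.2).1
    have hcoe : ((g * n * g⁻¹ : ↥(Y ⊓ B)) : Γ) = (g : Γ) * (n : Γ) * (g : Γ)⁻¹ := rfl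
    rw [Subgroup.mem_inf, hcoe]
    constructor
    · have := hnorm.conj_mem ⟨(n : Γ), hnY⟩ (by rwa [Subgroup.mem_subgroupOf])
        ⟨(g : Γ), hgY⟩
      rw [Subgroup.mem_subgroupOf] at this
      exact this
    · exact mul_mem (mul_mem hgB hnB) (inv_mem hgB)

  · have hdvd : (X ⊓ B).relIndex (Y ⊓ B) ∣ p := by
      rw [← hrel]
      exact relindex_inter_dvd X Y H N hHX hXY
    rcases (Nat.Prime.eq_one_or_self_of_dvd hp _ hdvd) with h1 | hp'
    · have heq : X ⊓ B = Y ⊓ B :=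
        le_antisymm hle (Subgroup.relIndex_eq_one.mp h1)
      rw [heq]
    · exact Relation.ReflTransGen.single ⟨hle, Or.inr ⟨p, hp, hp', hdiv⟩⟩

lemma kpt_chain_inter (t : ℕ) [Finite Γ] (H N : Subgroup Γ) [N.Normal]
    {X : Subgroup Γ} (hc : Relation.ReflTransGen (KPtStep t) X ⊤) (hHX : H ≤ X) :
    Relation.ReflTransGen (KPtStep t) (X ⊓ (H ⊔ N)) (H ⊔ N) := by
  induction hc using Relation.ReflTransGen.head_induction_on with
  | refl => rw [top_inf_eq]
  | head hs htail ih =>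
    exact (kptStep_inter t H N hHX hs).trans (ih (hHX.trans hs.1))

end Aux

theorem stmt_6 {G : Type*} [Group G] [Finite G] (t : ℕ) (ht : 1 ≤ t)
    (H N₁ N₂ : Subgroup G) [N₁.Normal] [N₂.Normal]
    (h1 : KPtSubnormal t (H ⊔ N₁)) (h2 : KPtSubnormal t (H ⊔ N₂)) :
    KPtSubnormal t ((H ⊔ N₁) ⊓ (H ⊔ N₂)) :=
  (kpt_chain_inter t H N₂ h1 le_sup_left).trans h2
end

section
/- Let G be a finite soluble group and H, U subgroups of G. If H is K-P_t-subnormal in G, then H ∩ U is K-P_t-subnormal in U. -/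
open Subgroup
open scoped commutatorElement

section Aux

variable {G : Type*} [Group G] {t : ℕ}

/-- A `KPt`-chain implies inclusion. -/
lemma kpt_chain_le {X Y : Subgroup G} (h : Relation.ReflTransGen (KPtStep t) X Y) : X ≤ Y := by
  induction h with
  | refl => exact le_rfl
  | tail _ step ih => exact ih.trans step.1

/-- Transfer a `KPtStep` down into a subgroup `U` containing both endpoints. -/
lemma KPtStep.subgroupOf {C D U : Subgroup G} (h : KPtStep t C D) (hDU : D ≤ U) :
    KPtStep t (C.subgroupOf U) (D.subgroupOf U) := by
  obtain ⟨hCD, hrest⟩ := h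
  refine ⟨Subgroup.comap_mono hCD, ?_⟩
  rcases hrest with hnorm | ⟨p, hp, hrel, hcond⟩
  · left
    have h1 : C.subgroupOf U ≤ D.subgroupOf U := Subgroup.comap_mono hCD
    rw [normal_subgroupOf_iff h1]
    intro x y hx hy
    rw [mem_subgroupOf] at hx hy ⊢
    push_cast
    exact (normal_subgroupOf_iff hCD).mp hnorm _ _ hx hy
  · right
    exact ⟨p, hp, by rwa [relIndex_subgroupOf hDU], hcond⟩

/-- Transfer a `KPtStep` up along the inclusion of a subgroup. -/
lemma KPtStep.map_subtype {B : Subgroup G} {X Y : Subgroup B} (h : KPtStep t X Y) :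
    KPtStep t (X.map B.subtype) (Y.map B.subtype) := by
  obtain ⟨hXY, hrest⟩ := h
  refine ⟨Subgroup.map_mono hXY, ?_⟩
  have hrelindex : (X.map B.subtype).relIndex (Y.map B.subtype) = X.relIndex Y := by
    have := Subgroup.relIndex_comap (H := X.map B.subtype) B.subtype Y
    rw [Subgroup.comap_map_eq, Subgroup.ker_subtype, sup_bot_eq] at this
    exact this.symm
  rcases hrest with hnorm | ⟨p, hp, hrel, hcond⟩
  · left
    rw [normal_subgroupOf_iff (Subgroup.map_mono hXY)]
    rintro x y ⟨x', hx', rfl⟩ ⟨y', hy', rfl⟩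
    have := (normal_subgroupOf_iff hXY).mp hnorm x' y' hx' hy'
    exact ⟨y' * x' * y'⁻¹, this, by simp⟩
  · right
    exact ⟨p, hp, by rwa [hrelindex], hcond⟩

end Aux

section Key

variable {B : Type*} [Group B] [Finite B] [Group.IsSolvable B]

/-- Every nontrivial finite solvable group has a nontrivial abelian normal subgroup. -/
lemma exists_abelian_normal (Q : Type*) [Group Q] [Group.IsSolvable Q] [Nontrivial Q] :
    ∃ M : Subgroup Q, M.Normal ∧ M ≠ ⊥ ∧ ∀ a ∈ M, ∀ b ∈ M, a * b = b * a := by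
  have hex : ∃ n, derivedSeries Q n = ⊥ := Group.IsSolvable.solvable
  classical
  set n0 := Nat.find hex with hn0
  have hspec : derivedSeries Q n0 = ⊥ := Nat.find_spec hex
  have hpos : n0 ≠ 0 := by
    intro h0
    rw [h0] at hspec
    simp only [derivedSeries] at hspec
    exact top_ne_bot hspec
  refine ⟨derivedSeries Q (n0 - 1), derivedSeries_normal Q _, Nat.find_min hex ?_, ?_⟩
  · omega
  · intro a ha b hb
    have h1 : ⁅a, b⁆ ∈ derivedSeries Q (n0 - 1 + 1) :=
      Subgroup.commutator_mem_commutator ha hb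
    have hn : n0 - 1 + 1 = n0 := by omega
    rw [hn, hspec, Subgroup.mem_bot] at h1
    exact (commutatorElement_eq_one_iff_commute.mp h1).eq

/-- The key lemma: if `A` has prime index `p` in a finite solvable group `B`, then for any
subgroup `V` there is a `KPt`-chain from `A ⊓ V` to `V`. -/
lemma key_chain (t p : ℕ) (hp : p.Prime)
    (hcond : ∀ q : ℕ, q.Prime → ¬ q ^ (t + 1) ∣ (p - 1)) (A V : Subgroup B)
    (hidx : A.index = p) :
    Relation.ReflTransGen (KPtStep t) (A ⊓ V) V := by
  classical
  set N := A.normalCore with hNdef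
  have hNA : N ≤ A := A.normalCore_le
  set φ := QuotientGroup.mk' N with hφ
  have hker : φ.ker = N := QuotientGroup.ker_mk' N
  have hsurj : Function.Surjective φ := QuotientGroup.mk'_surjective N
  set Abar : Subgroup (B ⧸ N) := A.map φ with hAbar
  have hAcomap : Abar.comap φ = A := by
    rw [hAbar, Subgroup.comap_map_eq, hker, sup_of_le_left hNA]
  have hidxbar : Abar.index = p := by
    rw [hAbar, A.index_map_eq hsurj (by rw [hker]; exact hNA : φ.ker ≤ A)]
    exact hidx
  -- the normal core of Abar is trivial
  have hcore : Abar.normalCore = ⊥ := by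
    have h2 : (Abar.normalCore.comap φ).Normal :=
      Subgroup.Normal.comap (Subgroup.normalCore_normal Abar) φ
    haveI := h2
    have h1 : Abar.normalCore.comap φ ≤ A :=
      le_trans (Subgroup.comap_mono Abar.normalCore_le) (le_of_eq hAcomap)
    have h3 : Abar.normalCore.comap φ ≤ N := normal_le_normalCore.mpr h1
    have h4 := Subgroup.map_mono (f := φ) h3
    rw [Subgroup.map_comap_eq_self_of_surjective hsurj] at h4
    have h5 : N.map φ = ⊥ := (Subgroup.map_eq_bot_iff _).mpr hker.ge
    rw [h5] at h4
    exact le_bot_iff.mp h4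
  -- the quotient is nontrivial
  have hAne : Abar ≠ ⊤ := by
    intro h
    rw [h, Subgroup.index_top] at hidxbar
    exact hp.ne_one hidxbar.symm
  haveI hQnt : Nontrivial (B ⧸ N) := by
    have hx : ∃ x, x ∉ Abar := by
      by_contra h
      push_neg at h
      exact hAne ((Subgroup.eq_top_iff' Abar).mpr h)
    obtain ⟨x, hx⟩ := hx
    exact ⟨⟨x, 1, fun h => hx (h ▸ Abar.one_mem)⟩⟩
  -- find a nontrivial abelian normal subgroup M
  obtain ⟨M, hMnormal, hMne, hMcomm⟩ := exists_abelian_normal (B ⧸ N)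
  haveI := hMnormal
  -- M ⊔ Abar = ⊤
  have hnleM : ¬M ≤ Abar := by
    intro hle
    exact hMne (le_bot_iff.mp (hcore ▸ normal_le_normalCore.mpr hle))
  have hMA_top : M ⊔ Abar = ⊤ := by
    have h1 : Abar.relIndex (M ⊔ Abar) * (M ⊔ Abar).index = Abar.index :=
      Subgroup.relIndex_mul_index le_sup_right
    rw [hidxbar] at h1
    have hdvd : (M ⊔ Abar).index ∣ p := Dvd.intro_left _ h1
    rcases hp.eq_one_or_self_of_dvd _ hdvd with h | h
    · exact Subgroup.index_eq_one.mp h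
    · exfalso
      rw [h] at h1
      have h2 : Abar.relIndex (M ⊔ Abar) = 1 :=
        Nat.eq_of_mul_eq_mul_right hp.pos (h1.trans (one_mul p).symm)
      exact hnleM (le_trans le_sup_left (Subgroup.relIndex_eq_one.mp h2))
  -- M ⊓ Abar = ⊥
  have hdisj : M ⊓ Abar = ⊥ := by
    have hle : M ⊓ Abar ≤ Abar.normalCore := by
      intro g hg
      intro x
      have hx : x ∈ M ⊔ Abar := hMA_top ▸ Subgroup.mem_top x
      rw [← SetLike.mem_coe, Subgroup.normal_mul] at hx
      obtain ⟨m, hm, a, ha, rfl⟩ := hx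
      have hy : a * g * a⁻¹ ∈ M := hMnormal.conj_mem g hg.1 a
      have heq : m * a * g * (m * a)⁻¹ = a * g * a⁻¹ := by
        have h1 : m * a * g * (m * a)⁻¹ = m * (a * g * a⁻¹) * m⁻¹ := by group
        rw [h1, hMcomm m hm _ hy, mul_inv_cancel_right]
      rw [show (m * a) * g * (m * a)⁻¹ = m * a * g * (m * a)⁻¹ from rfl, heq]
      exact mul_mem (mul_mem ha hg.2) (inv_mem ha)
    rw [hcore] at hle
    exact le_bot_iff.mp hle
  -- Nat.card M = p
  have hMidx : M.index = Nat.card Abar := by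
    have hMA_top' : Abar ⊔ M = ⊤ := by rw [sup_comm]; exact hMA_top
    have h1 : M.relIndex (Abar ⊔ M) = M.relIndex Abar := Subgroup.relIndex_sup_right Abar M
    rw [hMA_top', Subgroup.relIndex_top_right, ← Subgroup.inf_relIndex_right, hdisj,
      Subgroup.relIndex_bot_left] at h1
    exact h1
  have hcardM : Nat.card M = p := by
    have h2 : Nat.card M * M.index = Nat.card (B ⧸ N) := Subgroup.card_mul_index M
    have h3 : Nat.card Abar * Abar.index = Nat.card (B ⧸ N) := Subgroup.card_mul_index Abar
    rw [hMidx] at h2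
    rw [hidxbar] at h3
    have hA0 : 0 < Nat.card Abar := Nat.card_pos
    rw [mul_comm] at h2
    have := h2.trans h3.symm
    exact Nat.eq_of_mul_eq_mul_left hA0 this
  -- the centralizer of M is M
  have hMC : M ≤ Subgroup.centralizer (M : Set (B ⧸ N)) := by
    intro m hm
    rw [Subgroup.mem_centralizer_iff]
    intro h hh
    exact hMcomm h hh m hm
  have hCA : Subgroup.centralizer (M : Set (B ⧸ N)) ⊓ Abar = ⊥ := by
    have hle : Subgroup.centralizer (M : Set (B ⧸ N)) ⊓ Abar ≤ Abar.normalCore := by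
      intro g hg
      intro x
      have hx : x ∈ M ⊔ Abar := hMA_top ▸ Subgroup.mem_top x
      rw [← SetLike.mem_coe, Subgroup.normal_mul] at hx
      obtain ⟨m, hm, a, ha, rfl⟩ := hx
      have hcomm : m * g = g * m := Subgroup.mem_centralizer_iff.mp hg.1 m hm
      have heq : m * a * g * (m * a)⁻¹ = m * (a * g * a⁻¹) * m⁻¹ := by group
      -- a * g * a⁻¹ commutes with m? We instead use that g commutes with conjugates of m
      -- rewrite differently: m * a * g * a⁻¹ * m⁻¹
      -- Since a⁻¹ * m * a ∈ M and g centralizes M: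
      have hm' : a⁻¹ * m * a ∈ M := by
        have := hMnormal.conj_mem m hm a⁻¹
        convert this using 2
        exact (inv_inv a).symm
      have hcomm' : (a⁻¹ * m * a) * g = g * (a⁻¹ * m * a) :=
        Subgroup.mem_centralizer_iff.mp hg.1 _ hm'
      have heq2 : (m * a) * g * (m * a)⁻¹ = a * ((a⁻¹ * m * a) * g * (a⁻¹ * m * a)⁻¹) * a⁻¹ := by
        group
      rw [heq2, hcomm', mul_inv_cancel_right]
      exact mul_mem (mul_mem ha hg.2) (inv_mem ha)
    rw [hcore] at hle
    exact le_bot_iff.mp hle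
  have hC : Subgroup.centralizer (M : Set (B ⧸ N)) = M := by
    refine le_antisymm ?_ hMC
    intro c hc
    have hcmem : c ∈ M ⊔ Abar := hMA_top ▸ Subgroup.mem_top c
    rw [← SetLike.mem_coe, Subgroup.normal_mul] at hcmem
    obtain ⟨m, hm, a, ha, rfl⟩ := hcmem
    have haC : a ∈ Subgroup.centralizer (M : Set (B ⧸ N)) := by
      have hmC : m ∈ Subgroup.centralizer (M : Set (B ⧸ N)) := hMC hm
      have := mul_mem (inv_mem hmC) hc
      simpa using this
    have : a ∈ (⊥ : Subgroup (B ⧸ N)) := hCA ▸ Subgroup.mem_inf.mpr ⟨haC, ha⟩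
    rw [Subgroup.mem_bot] at this
    simpa [this] using hm
  -- every commutator of B ⧸ N lies in M
  haveI : Fact p.Prime := ⟨hp⟩
  haveI hMcyc : IsCyclic M := isCyclic_of_prime_card (p := p) (by simpa using hcardM)
  have hcommQ : ∀ x y : B ⧸ N, ⁅x, y⁆ ∈ M := by
    intro x y
    have hAut : ∀ g h : MulAut M, g * h = h * g := by
      intro g h
      obtain ⟨mg, hmg⟩ := MonoidHom.map_cyclic g.toMonoidHom
      obtain ⟨mh, hmh⟩ := MonoidHom.map_cyclic h.toMonoidHom
      have h1 : ∀ k : M, g k = k ^ mg := hmg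
      have h2 : ∀ k : M, h k = k ^ mh := hmh
      refine MulEquiv.ext fun k => ?_
      have hgh : g (h k) = h (g k) := by
        rw [h1, h2, h1, h2, ← zpow_mul, ← zpow_mul, mul_comm]
      simpa [MulAut.mul_apply] using hgh
    have h1 : MulAut.conjNormal ⁅x, y⁆ = (1 : MulAut M) := by
      rw [map_commutatorElement]
      exact commutatorElement_eq_one_iff_commute.mpr (hAut _ _)
    rw [← hC, Subgroup.mem_centralizer_iff]
    intro m hm
    have h2 := congrArg (fun e : MulAut M => (e ⟨m, hm⟩ : B ⧸ N)) h1
    simp only [MulAut.conjNormal_apply, MulAut.one_apply] at h2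
    -- h2 : ⁅x,y⁆ * m * ⁅x,y⁆⁻¹ = m
    exact (mul_inv_eq_iff_eq_mul.mp h2).symm
  -- pull everything back to B
  set M' : Subgroup B := M.comap φ with hM'
  haveI hM'norm : M'.Normal := hMnormal.comap φ
  have hNM' : N ≤ M' := by
    intro x hx
    have hx1 : φ x = 1 := by rwa [← MonoidHom.mem_ker, hker]
    exact Subgroup.mem_comap.mpr (hx1 ▸ M.one_mem)
  have hM'A : M' ⊓ A = N := by
    have h1 : M' ⊓ A = Subgroup.comap φ (M ⊓ Abar) := by
      rw [Subgroup.comap_inf, hAcomap]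
    rw [h1, hdisj, MonoidHom.comap_bot, hker]
  have hcommB : ∀ x y : B, ⁅x, y⁆ ∈ M' := by
    intro x y
    rw [hM', Subgroup.mem_comap, map_commutatorElement]
    exact hcommQ (φ x) (φ y)
  -- build the chain A ⊓ V ≤ X ≤ V
  set S := A ⊓ V with hS
  set W := M' ⊓ V with hW
  set X := S ⊔ W with hX
  have hSV : S ≤ V := inf_le_right
  have hWV : W ≤ V := inf_le_right
  have hXV : X ≤ V := sup_le hSV hWV
  have hSX : S ≤ X := le_sup_left
  -- the step X ≤ V is normal
  have hstep2 : KPtStep t X V := by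
    refine ⟨hXV, Or.inl ?_⟩
    rw [normal_subgroupOf_iff hXV]
    intro x v hx hv
    have hxV : x ∈ V := hXV hx
    have hcv : ⁅v, x⁆ ∈ W := by
      rw [hW, Subgroup.mem_inf]
      refine ⟨hcommB v x, ?_⟩
      rw [commutatorElement_def]
      exact V.mul_mem (V.mul_mem (V.mul_mem hv hxV) (V.inv_mem hv)) (V.inv_mem hxV)
    have h1 : v * x * v⁻¹ = ⁅v, x⁆ * x := by rw [commutatorElement_def]; group
    rw [h1]
    exact mul_mem (Subgroup.mem_sup_right hcv) hx
  -- compute the relative index of S in X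
  have hSW : S ⊓ W = N ⊓ V := by
    have h1 : S ⊓ W = (A ⊓ M') ⊓ V := by
      rw [hS, hW]
      ext x
      simp only [Subgroup.mem_inf]
      tauto
    rw [h1, inf_comm A M', hM'A]
  have hrelSX : S.relIndex X ∣ p := by
    have hV1 : W.relIndex X = (S ⊓ W).relIndex S := by
      have hXsub : X.subgroupOf V = S.subgroupOf V ⊔ W.subgroupOf V :=
        Subgroup.subgroupOf_sup hSV hWV
      have hWnorm : (W.subgroupOf V).Normal := by
        rw [hW, inf_subgroupOf_right]
        infer_instance
      haveI := hWnorm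
      calc W.relIndex X = (W.subgroupOf V).relIndex (X.subgroupOf V) :=
            (relIndex_subgroupOf hXV).symm
        _ = (W.subgroupOf V).relIndex (S.subgroupOf V ⊔ W.subgroupOf V) := by rw [hXsub]
        _ = (W.subgroupOf V).relIndex (S.subgroupOf V) :=
            Subgroup.relIndex_sup_right _ _
        _ = W.relIndex S := relIndex_subgroupOf hSV
        _ = (W ⊓ S).relIndex S := (Subgroup.inf_relIndex_right _ _).symm
        _ = (S ⊓ W).relIndex S := by rw [inf_comm]
    have hmul1 : (S ⊓ W).relIndex S * S.relIndex X = (S ⊓ W).relIndex X :=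
      Subgroup.relIndex_mul_relIndex _ _ _ inf_le_left hSX
    have hmul2 : (S ⊓ W).relIndex W * W.relIndex X = (S ⊓ W).relIndex X :=
      Subgroup.relIndex_mul_relIndex _ _ _ inf_le_right le_sup_right
    rw [hV1] at hmul2
    have hne : (S ⊓ W).relIndex S ≠ 0 :=
      Subgroup.index_ne_zero_of_finite (H := (S ⊓ W).subgroupOf S)
    have heq : S.relIndex X = (S ⊓ W).relIndex W := by
      have h1 : (S ⊓ W).relIndex S * S.relIndex X
          = (S ⊓ W).relIndex S * (S ⊓ W).relIndex W := by
        rw [hmul1, ← hmul2]; ring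
      exact Nat.eq_of_mul_eq_mul_left (Nat.pos_of_ne_zero hne) h1
    rw [heq, hSW]
    have hNV : N ⊓ V = N ⊓ W := by
      rw [hW, ← inf_assoc, inf_of_le_left hNM']
    rw [hNV, Subgroup.inf_relIndex_right, ← hker, Subgroup.relIndex_ker]
    have hle : W.map φ ≤ M := by
      calc W.map φ ≤ M'.map φ := Subgroup.map_mono inf_le_left
        _ = (M.comap φ).map φ := by rw [hM']
        _ ≤ M := Subgroup.map_comap_le φ M
    calc Nat.card (W.map φ) ∣ Nat.card M := Subgroup.card_dvd_of_le hle
      _ = p := hcardM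
  -- conclude
  rcases hp.eq_one_or_self_of_dvd _ hrelSX with h1 | h1
  · have hXS : X ≤ S := Subgroup.relIndex_eq_one.mp h1
    have hSXeq : S = X := le_antisymm hSX hXS
    exact Relation.ReflTransGen.single (hSXeq ▸ hstep2)
  · exact Relation.ReflTransGen.head ⟨hSX, Or.inr ⟨p, hp, h1, hcond⟩⟩
      (Relation.ReflTransGen.single hstep2)

end Key

section Main

variable {G : Type*} [Group G] [Finite G] [Group.IsSolvable G] {t : ℕ}

/-- Intersecting one `KPtStep` with a subgroup `U` yields a `KPt`-chain. -/
lemma kpt_step_inter {A B' : Subgroup G} (U : Subgroup G) (h : KPtStep t A B') :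
    Relation.ReflTransGen (KPtStep t) (A ⊓ U) (B' ⊓ U) := by
  obtain ⟨hAB, hrest⟩ := h
  set A₁ := A.subgroupOf B' with hA₁
  set V₁ := U.subgroupOf B' with hV₁
  have hchain : Relation.ReflTransGen (KPtStep t) (A₁ ⊓ V₁) V₁ := by
    rcases hrest with hnorm | ⟨p, hp, hrel, hcond⟩
    · refine Relation.ReflTransGen.single ⟨inf_le_right, Or.inl ?_⟩
      rw [inf_subgroupOf_right]
      haveI := hnorm
      infer_instance
    · exact key_chain t p hp hcond A₁ V₁ hrel
  have hmap := Relation.ReflTransGen.lift (fun K : Subgroup B' => K.map B'.subtype)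
    (fun _ _ hstep => hstep.map_subtype) _ _ hchain
  dsimp only [Function.onFun] at hmap
  have h1 : (A₁ ⊓ V₁).map B'.subtype = A ⊓ U := by
    have : A₁ ⊓ V₁ = (A ⊓ U).subgroupOf B' := by
      rw [hA₁, hV₁]
      exact (Subgroup.comap_inf _ _ _).symm
    rw [this, subgroupOf_map_subtype, inf_eq_left.mpr (le_trans inf_le_left hAB)]
  have h2 : V₁.map B'.subtype = B' ⊓ U := by
    rw [hV₁, subgroupOf_map_subtype, inf_comm]
  rwa [h1, h2] at hmap

/-- Intersecting a `KPt`-chain to the top with `U` yields a chain from `K ⊓ U` to `U`. -/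
lemma kpt_chain_inter_s7 (U : Subgroup G) {K : Subgroup G}
    (h : Relation.ReflTransGen (KPtStep t) K ⊤) :
    Relation.ReflTransGen (KPtStep t) (K ⊓ U) U := by
  induction h using Relation.ReflTransGen.head_induction_on with
  | refl => rw [top_inf_eq]
  | head hstep _ ih =>
    exact Relation.ReflTransGen.trans (kpt_step_inter U hstep) ih

/-- A `KPt`-chain from `K` to `U` gives `K.subgroupOf U` subnormal in `U`. -/
lemma kpt_chain_to_subnormal {U K : Subgroup G}
    (h : Relation.ReflTransGen (KPtStep t) K U) :
    Relation.ReflTransGen (KPtStep t) (K.subgroupOf U) (⊤ : Subgroup U) := by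
  induction h using Relation.ReflTransGen.head_induction_on with
  | refl => rw [subgroupOf_self]
  | @head K' D hstep hchain ih =>
    exact Relation.ReflTransGen.head (hstep.subgroupOf (kpt_chain_le hchain)) ih

end Main

theorem stmt_7 {G : Type*} [Group G] [Finite G] [Group.IsSolvable G] (t : ℕ) (ht : 1 ≤ t)
    (H U : Subgroup G) (hH : KPtSubnormal t H) :
    KPtSubnormal t ((H ⊓ U).subgroupOf U) := by
  exact kpt_chain_to_subnormal (kpt_chain_inter_s7 U hH)
end

section
/- Let G be a finite soluble group. If H and U are both K-P_t-subnormal subgroups of G, then H ∩ U is K-P_t-subnormal in G. -/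
open Subgroup

/-- Automorphisms of a cyclic group commute. -/
lemma aux_mulAut_commute {M : Type*} [Group M] [IsCyclic M] (σ τ : MulAut M) :
    Commute σ τ := by
  obtain ⟨g, hg⟩ := IsCyclic.exists_generator (α := M)
  obtain ⟨i, hi⟩ := Subgroup.mem_zpowers_iff.mp (hg (σ g))
  obtain ⟨j, hj⟩ := Subgroup.mem_zpowers_iff.mp (hg (τ g))
  show σ * τ = τ * σ
  apply MulEquiv.ext
  intro x
  obtain ⟨k, rfl⟩ := Subgroup.mem_zpowers_iff.mp (hg x)
  have h1 : (σ * τ) (g ^ k) = g ^ (i * (j * k)) := by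
    show σ (τ (g ^ k)) = _
    rw [map_zpow, ← hj, ← zpow_mul, map_zpow, ← hi, ← zpow_mul]
  have h2 : (τ * σ) (g ^ k) = g ^ (j * (i * k)) := by
    show τ (σ (g ^ k)) = _
    rw [map_zpow, ← hi, ← zpow_mul, map_zpow, ← hj, ← zpow_mul]
  rw [h1, h2]
  ring_nf

/-- Key structural lemma: in a finite soluble group with a core-free subgroup `a` of
prime index `p`, for any subgroup `c`, either commutators of elements of `c` lie in `a`,
or `c * a` covers the whole group. -/
lemma aux_key {Γ : Type*} [Group Γ] [Finite Γ] [Group.IsSolvable Γ] {p : ℕ} (hp : p.Prime)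
    (a c : Subgroup Γ) (ha : a.index = p) (hcore : a.normalCore = ⊥) :
    (∀ g ∈ c, ∀ x ∈ c, g * x * g⁻¹ * x⁻¹ ∈ a) ∨ (∀ b : Γ, ∃ x ∈ c, x⁻¹ * b ∈ a) := by
  have hΓ : Nontrivial Γ := by
    by_contra h
    rw [not_nontrivial_iff_subsingleton] at h
    have htop : a = ⊤ := by
      ext x
      simp [Subsingleton.elim x 1, one_mem]
    rw [htop, Subgroup.index_top] at ha
    exact hp.ne_one ha.symm
  -- minimal nontrivial normal subgroup
  let S : Set ℕ := {n | ∃ M : Subgroup Γ, M.Normal ∧ M ≠ ⊥ ∧ Nat.card M = n}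
  have hS : S.Nonempty := by
    refine ⟨Nat.card (⊤ : Subgroup Γ), ⊤, inferInstance, ?_, rfl⟩
    intro h
    obtain ⟨x, hx1⟩ := exists_ne (1 : Γ)
    have hx : x ∈ (⊥ : Subgroup Γ) := h ▸ Subgroup.mem_top x
    rw [Subgroup.mem_bot] at hx
    exact hx1 hx
  obtain ⟨M, hMnorm, hMne, hMcard⟩ := Nat.sInf_mem hS
  haveI := hMnorm
  have hminM : ∀ K : Subgroup Γ, K.Normal → K ≠ ⊥ → Nat.card M ≤ Nat.card K := by
    intro K h1 h2
    rw [hMcard]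
    exact Nat.sInf_le ⟨K, h1, h2, rfl⟩
  -- M is abelian
  have habM : ∀ x ∈ M, ∀ y ∈ M, x * y = y * x := by
    have hcomm : (⁅M, M⁆ : Subgroup Γ) = ⊥ := by
      by_contra hne
      have hle : (⁅M, M⁆ : Subgroup Γ) ≤ M := Subgroup.commutator_le_left M M
      have hcard : Nat.card M ≤ Nat.card (⁅M, M⁆ : Subgroup Γ) :=
        hminM _ inferInstance hne
      have heq : (⁅M, M⁆ : Subgroup Γ) = M := Subgroup.eq_of_le_of_card_ge hle hcard
      obtain ⟨n, hn⟩ := (isSolvable_def Γ).mp inferInstance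
      have hM : ∀ k, M ≤ derivedSeries Γ k := by
        intro k
        induction k with
        | zero => simp [derivedSeries_zero]
        | succ k ih =>
            rw [derivedSeries_succ]
            calc M = ⁅M, M⁆ := heq.symm
              _ ≤ _ := Subgroup.commutator_mono ih ih
      have := hM n
      rw [hn] at this
      exact hMne (le_bot_iff.mp this)
    intro x hx y hy
    have h := Subgroup.commutator_mem_commutator hx hy
    rw [hcomm, Subgroup.mem_bot] at h
    exact commutatorElement_eq_one_iff_mul_comm.mp h
  -- M is not contained in a
  have hMa : ¬ M ≤ a := by
    intro h
    exact hMne (le_bot_iff.mp (hcore ▸ normal_le_normalCore.mpr h))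
  -- a ⊔ M = ⊤
  have hsup : a ⊔ M = ⊤ := by
    have h1 : a.relIndex (a ⊔ M) * (a ⊔ M).index = a.index := relIndex_mul_index le_sup_left
    rw [ha] at h1
    have hdvd : (a ⊔ M).index ∣ p := ⟨a.relIndex (a ⊔ M), by rw [← h1]; ring⟩
    rcases hp.eq_one_or_self_of_dvd _ hdvd with h | h
    · exact Subgroup.index_eq_one.mp h
    · rw [h] at h1
      have hrel : a.relIndex (a ⊔ M) = 1 :=
        Nat.eq_of_mul_eq_mul_right hp.pos (h1.trans (one_mul p).symm)
      exact absurd (le_sup_right.trans (Subgroup.relIndex_eq_one.mp hrel)) hMa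
  -- a ⊓ M = ⊥
  have hinf : a ⊓ M = ⊥ := by
    have hnormal : (a ⊓ M).Normal := by
      rw [← Subgroup.normalizer_eq_top_iff, eq_top_iff, ← hsup, sup_le_iff]
      constructor
      · intro g hg
        rw [Subgroup.mem_normalizer_iff]
        intro h
        rw [Subgroup.mem_inf, Subgroup.mem_inf]
        constructor
        · rintro ⟨h1, h2⟩
          exact ⟨mul_mem (mul_mem hg h1) (inv_mem hg), hMnorm.conj_mem _ h2 _⟩
        · rintro ⟨h1, h2⟩
          have e1 : h = g⁻¹ * (g * h * g⁻¹) * g := by group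
          constructor
          · rw [e1]; exact mul_mem (mul_mem (inv_mem hg) h1) hg
          · rw [e1]
            have := hMnorm.conj_mem _ h2 g⁻¹
            simpa using this
      · intro m hm
        rw [Subgroup.mem_normalizer_iff]
        intro h
        rw [Subgroup.mem_inf, Subgroup.mem_inf]
        constructor
        · rintro ⟨h1, h2⟩
          have heq : m * h * m⁻¹ = h := by
            rw [habM m hm h h2, mul_inv_cancel_right]
          rw [heq]
          exact ⟨h1, h2⟩
        · rintro ⟨h1, h2⟩
          have hhM : h ∈ M := by
            have e1 : h = m⁻¹ * (m * h * m⁻¹) * m := by group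
            rw [e1]
            exact mul_mem (mul_mem (inv_mem hm) h2) hm
          have heq : m * h * m⁻¹ = h := by
            rw [habM m hm h hhM, mul_inv_cancel_right]
          rw [heq] at h1
          exact ⟨h1, hhM⟩
    haveI := hnormal
    have := normal_le_normalCore.mpr (inf_le_left : a ⊓ M ≤ a)
    rw [hcore] at this
    exact le_bot_iff.mp this
  -- |M| = p
  have hcardM : Nat.card M = p := by
    have hbij : Function.Bijective (fun x : a × M => (x.1 : Γ) * x.2) := by
      constructor
      · rintro ⟨x1, m1⟩ ⟨x2, m2⟩ h
        simp only at h
        have h2 : (x2 : Γ)⁻¹ * x1 = (m2 : Γ) * (m1 : Γ)⁻¹ := by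
          have h3 := congrArg (fun z => (x2 : Γ)⁻¹ * z * (m1 : Γ)⁻¹) h
          simpa [mul_assoc] using h3
        have hmem : (x2 : Γ)⁻¹ * x1 ∈ a ⊓ M := Subgroup.mem_inf.mpr
          ⟨mul_mem (inv_mem x2.2) x1.2, h2 ▸ mul_mem m2.2 (inv_mem m1.2)⟩
        rw [hinf, Subgroup.mem_bot] at hmem
        have hx : (x2 : Γ) = x1 := inv_mul_eq_one.mp hmem
        have hm : (m1 : Γ) = m2 := by
          rw [← hx] at h
          exact mul_left_cancel h
        exact Prod.ext (Subtype.ext hx.symm) (Subtype.ext hm)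
      · intro b
        have hb : b ∈ (↑(a ⊔ M) : Set Γ) := by rw [hsup]; trivial
        rw [Subgroup.mul_normal] at hb
        obtain ⟨x, hx, m, hm, hbe⟩ := hb
        exact ⟨(⟨⟨x, hx⟩, ⟨m, hm⟩⟩ : a × M), hbe⟩
    have hcard := Nat.card_eq_of_bijective _ hbij
    rw [Nat.card_prod] at hcard
    have h3 : Nat.card a * Nat.card M = Nat.card a * a.index := by
      rw [hcard, ← Subgroup.card_mul_index a]
    have h4 : Nat.card M = a.index :=
      Nat.eq_of_mul_eq_mul_left Nat.card_pos h3
    rw [h4, ha]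
  haveI : Fact p.Prime := ⟨hp⟩
  haveI : IsCyclic M := isCyclic_of_prime_card hcardM
  -- conjugation action on M
  let ρ : Γ →* MulAut M := MulAut.conjNormal
  have hMker : M ≤ ρ.ker := by
    intro m hm
    rw [MonoidHom.mem_ker]
    refine MulEquiv.ext fun x => Subtype.ext ?_
    show m * (x : Γ) * m⁻¹ = x
    rw [habM m hm x x.2, mul_inv_cancel_right]
  have hcomm' : ∀ z ∈ ρ.ker, ∀ m ∈ M, z * m = m * z := by
    intro z hz m hm
    have h1 : ρ z ⟨m, hm⟩ = ⟨m, hm⟩ := by rw [MonoidHom.mem_ker.mp hz]; rfl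
    have h2 : z * m * z⁻¹ = m := congrArg Subtype.val h1
    calc z * m = z * m * z⁻¹ * z := by group
      _ = m * z := by rw [h2]
  have hkerM : ρ.ker ≤ M := by
    have hZa : ρ.ker ⊓ a = ⊥ := by
      have hnormal : (ρ.ker ⊓ a).Normal := by
        rw [← Subgroup.normalizer_eq_top_iff, eq_top_iff, ← hsup, sup_le_iff]
        constructor
        · intro g hg
          rw [Subgroup.mem_normalizer_iff]
          intro h
          rw [Subgroup.mem_inf, Subgroup.mem_inf]
          constructor
          · rintro ⟨h1, h2⟩
            exact ⟨(MonoidHom.normal_ker ρ).conj_mem _ h1 _,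
              mul_mem (mul_mem hg h2) (inv_mem hg)⟩
          · rintro ⟨h1, h2⟩
            have e1 : h = g⁻¹ * (g * h * g⁻¹) * g := by group
            constructor
            · have := (MonoidHom.normal_ker ρ).conj_mem _ h1 g⁻¹
              rw [e1]
              simpa using this
            · rw [e1]
              exact mul_mem (mul_mem (inv_mem hg) h2) hg
        · intro m hm
          rw [Subgroup.mem_normalizer_iff]
          intro h
          rw [Subgroup.mem_inf, Subgroup.mem_inf]
          constructor
          · rintro ⟨h1, h2⟩
            have heq : m * h * m⁻¹ = h := by
              rw [← hcomm' h h1 m hm, mul_inv_cancel_right]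
            rw [heq]
            exact ⟨h1, h2⟩
          · rintro ⟨h1, h2⟩
            have h3 := hcomm' _ h1 m hm
            have h4 : m * h = m * (m * h * m⁻¹) := by
              calc m * h = m * h * m⁻¹ * m := by group
                _ = m * (m * h * m⁻¹) := h3
            have heq : h = m * h * m⁻¹ := mul_left_cancel h4
            rw [← heq] at h1 h2
            exact ⟨h1, h2⟩
      haveI := hnormal
      have := normal_le_normalCore.mpr (inf_le_right : ρ.ker ⊓ a ≤ a)
      rw [hcore] at this
      exact le_bot_iff.mp this
    intro z hz
    have hsup' : M ⊔ a = ⊤ := by rw [sup_comm]; exact hsup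
    have hz2 : z ∈ (↑(M ⊔ a) : Set Γ) := by rw [hsup']; trivial
    rw [Subgroup.normal_mul] at hz2
    obtain ⟨m, hm, x, hx, hzeq⟩ := hz2
    have hxk : x ∈ ρ.ker := by
      have hxe : x = m⁻¹ * z := by rw [← hzeq]; group
      rw [hxe]
      exact mul_mem (inv_mem (hMker hm)) hz
    have hxb : x ∈ ρ.ker ⊓ a := Subgroup.mem_inf.mpr ⟨hxk, hx⟩
    rw [hZa, Subgroup.mem_bot] at hxb
    rw [← hzeq, hxb]
    simpa using hm
  -- dichotomy
  by_cases hcase : c ⊓ M ≤ a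
  · left
    intro g hg x hx
    have h1 : g * x * g⁻¹ * x⁻¹ ∈ ρ.ker := by
      rw [MonoidHom.mem_ker]
      have he : ρ (g * x * g⁻¹ * x⁻¹) = ρ g * ρ x * (ρ g)⁻¹ * (ρ x)⁻¹ := by
        simp [map_mul, map_inv]
      rw [he, mul_inv_eq_one, mul_inv_eq_iff_eq_mul]
      exact aux_mulAut_commute (ρ g) (ρ x)
    have h2 : g * x * g⁻¹ * x⁻¹ ∈ c :=
      mul_mem (mul_mem (mul_mem hg hx) (inv_mem hg)) (inv_mem hx)
    exact hcase (Subgroup.mem_inf.mpr ⟨h2, hkerM h1⟩)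
  · right
    obtain ⟨y, hy, hya⟩ := SetLike.not_le_iff_exists.mp hcase
    have hne : c ⊓ M ≠ ⊥ := by
      intro h
      rw [h, Subgroup.mem_bot] at hy
      exact hya (hy ▸ one_mem a)
    have hle : c ⊓ M ≤ M := inf_le_right
    have hcardcM : Nat.card (c ⊓ M : Subgroup Γ) = p := by
      have hdvd := Subgroup.card_dvd_of_le hle
      rw [hcardM] at hdvd
      rcases hp.eq_one_or_self_of_dvd _ hdvd with h | h
      · have := (Subgroup.one_lt_card_iff_ne_bot (c ⊓ M)).mpr hne
        omega
      · exact h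
    have hMc : M ≤ c := by
      have heq : c ⊓ M = M :=
        Subgroup.eq_of_le_of_card_ge hle (by rw [hcardcM, hcardM])
      exact heq ▸ inf_le_left
    intro b
    have hsup' : M ⊔ a = ⊤ := by rw [sup_comm]; exact hsup
    have hb : b ∈ (↑(M ⊔ a) : Set Γ) := by rw [hsup']; trivial
    rw [Subgroup.normal_mul] at hb
    obtain ⟨m, hm, x, hx, hbeq⟩ := hb
    refine ⟨m, hMc hm, ?_⟩
    have he : m⁻¹ * b = x := by rw [← hbeq]; group
    rw [he]
    exact hx

/-- Core lemma: lift the core-free hypothesis by quotienting by the normal core. -/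
lemma aux_core {β : Type*} [Group β] [Finite β] [Group.IsSolvable β] {p : ℕ} (hp : p.Prime)
    (a c : Subgroup β) (ha : a.index = p) :
    (∀ g ∈ c, ∀ x ∈ c, g * x * g⁻¹ * x⁻¹ ∈ a) ∨ (∀ b : β, ∃ x ∈ c, x⁻¹ * b ∈ a) := by
  set N := a.normalCore with hN
  let π := QuotientGroup.mk' N
  have hsurj : Function.Surjective π := QuotientGroup.mk'_surjective N
  have hker : π.ker = N := QuotientGroup.ker_mk' N
  have hkerle : π.ker ≤ a := by rw [hker, hN]; exact a.normalCore_le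
  have hA : (a.map π).index = p := by
    rw [a.index_map_eq hsurj hkerle, ha]
  have hAcore : (a.map π).normalCore = ⊥ := by
    have h1 : Subgroup.comap π ((a.map π).normalCore) ≤ a := by
      calc Subgroup.comap π ((a.map π).normalCore)
          ≤ Subgroup.comap π (a.map π) := comap_mono (normalCore_le _)
        _ = a ⊔ π.ker := Subgroup.comap_map_eq π a
        _ = a := sup_eq_left.mpr hkerle
    haveI : (Subgroup.comap π ((a.map π).normalCore)).Normal :=
      Subgroup.normal_comap π
    have h2 : Subgroup.comap π ((a.map π).normalCore) ≤ N :=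
      normal_le_normalCore.mpr h1
    have h3 : (a.map π).normalCore =
        Subgroup.map π (Subgroup.comap π ((a.map π).normalCore)) :=
      (Subgroup.map_comap_eq_self_of_surjective hsurj _).symm
    rw [h3]
    apply le_bot_iff.mp
    intro x hx
    obtain ⟨y, hy, rfl⟩ := hx
    have hyk : y ∈ π.ker := by rw [hker]; exact h2 hy
    rw [Subgroup.mem_bot]
    exact MonoidHom.mem_ker.mp hyk
  rcases aux_key hp (a.map π) (c.map π) hA hAcore with h | h
  · left
    intro g hg x hx
    have hkey := h (π g) ⟨g, hg, rfl⟩ (π x) ⟨x, hx, rfl⟩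
    have h2 : g * x * g⁻¹ * x⁻¹ ∈ Subgroup.comap π (a.map π) := by
      rw [Subgroup.mem_comap]
      simpa [map_mul, map_inv] using hkey
    rwa [Subgroup.comap_map_eq, sup_of_le_left hkerle] at h2
  · right
    intro b
    obtain ⟨xq, hxq, hxb⟩ := h (π b)
    obtain ⟨x, hx, rfl⟩ := hxq
    refine ⟨x, hx, ?_⟩
    have h2 : x⁻¹ * b ∈ Subgroup.comap π (a.map π) := by
      rw [Subgroup.mem_comap]
      simpa [map_mul, map_inv] using hxb
    rwa [Subgroup.comap_map_eq, sup_of_le_left hkerle] at h2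

/-- If `B ⊆ C * A` then the relative index of `A ⊓ C` in `C` equals that of `A` in `B`. -/
lemma aux_relIndex_eq {G : Type*} [Group G] {A B C : Subgroup G} (hAB : A ≤ B) (hCB : C ≤ B)
    (h : ∀ b ∈ B, ∃ x ∈ C, x⁻¹ * b ∈ A) : (A ⊓ C).relIndex C = A.relIndex B := by
  rw [Subgroup.inf_relIndex_right]
  rw [Subgroup.relIndex, Subgroup.relIndex, Subgroup.index_eq_card, Subgroup.index_eq_card]
  have hwd : ∀ x y : C, @Setoid.r _ (QuotientGroup.leftRel (A.subgroupOf C)) x y →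
      @Setoid.r _ (QuotientGroup.leftRel (A.subgroupOf B))
        (Subgroup.inclusion hCB x) (Subgroup.inclusion hCB y) := by
    intro x y hxy
    rw [QuotientGroup.leftRel_apply] at hxy
    rw [QuotientGroup.leftRel_apply]
    rw [Subgroup.mem_subgroupOf] at hxy ⊢
    simpa using hxy
  let f : C ⧸ (A.subgroupOf C) → B ⧸ (A.subgroupOf B) :=
    Quotient.map' (Subgroup.inclusion hCB) hwd
  have hbij : Function.Bijective f := by
    constructor
    · intro q1 q2
      refine Quotient.inductionOn₂' q1 q2 fun x y hxy => ?_
      have hxy' : @Setoid.r _ (QuotientGroup.leftRel (A.subgroupOf B))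
          (Subgroup.inclusion hCB x) (Subgroup.inclusion hCB y) := Quotient.eq''.mp hxy
      rw [QuotientGroup.leftRel_apply, Subgroup.mem_subgroupOf] at hxy'
      apply Quotient.sound'
      rw [QuotientGroup.leftRel_apply, Subgroup.mem_subgroupOf]
      simpa using hxy'
    · intro q
      refine Quotient.inductionOn' q fun b => ?_
      obtain ⟨x, hxC, hxA⟩ := h b.1 b.2
      refine ⟨Quotient.mk'' ⟨x, hxC⟩, ?_⟩
      show Quotient.map' _ _ _ = _
      rw [Quotient.map'_mk'']
      apply Quotient.sound'
      rw [QuotientGroup.leftRel_apply, Subgroup.mem_subgroupOf]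
      simpa using hxA
  exact Nat.card_eq_of_bijective f hbij

/-- One intersected step: if `A → B` is a `KPtStep` and `C ≤ B`, then
`A ⊓ C → C` is a `KPtStep`. -/
lemma aux_claimA {G : Type*} [Group G] [Finite G] [Group.IsSolvable G] {t : ℕ} {A B : Subgroup G}
    (hstep : KPtStep t A B) (C : Subgroup G) (hCB : C ≤ B) : KPtStep t (A ⊓ C) C := by
  obtain ⟨hAB, hdisj⟩ := hstep
  refine ⟨inf_le_right, ?_⟩
  rcases hdisj with hnorm | ⟨p, hp, hrel, hcond⟩
  · left
    constructor
    intro x hx g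
    rw [Subgroup.mem_subgroupOf] at hx ⊢
    obtain ⟨hxA, hxC⟩ := Subgroup.mem_inf.mp hx
    refine Subgroup.mem_inf.mpr ⟨?_, mul_mem (mul_mem g.2 x.2) (inv_mem g.2)⟩
    have hmem : (⟨(x : G), hCB x.2⟩ : B) ∈ A.subgroupOf B := by
      rw [Subgroup.mem_subgroupOf]
      exact hxA
    have := hnorm.conj_mem _ hmem (⟨(g : G), hCB g.2⟩ : B)
    rw [Subgroup.mem_subgroupOf] at this
    exact this
  · have hidx : (A.subgroupOf B).index = p := hrel
    rcases aux_core hp (A.subgroupOf B) (C.subgroupOf B) hidx with h | h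
    · left
      constructor
      intro x hx g
      rw [Subgroup.mem_subgroupOf] at hx ⊢
      obtain ⟨hxA, hxC⟩ := Subgroup.mem_inf.mp hx
      refine Subgroup.mem_inf.mpr ⟨?_, mul_mem (mul_mem g.2 x.2) (inv_mem g.2)⟩
      have hkey := h (⟨(g : G), hCB g.2⟩ : B)
        (by rw [Subgroup.mem_subgroupOf]; exact g.2)
        (⟨(x : G), hCB x.2⟩ : B)
        (by rw [Subgroup.mem_subgroupOf]; exact x.2)
      rw [Subgroup.mem_subgroupOf] at hkey
      have hval : (g : G) * x * (g : G)⁻¹ * (x : G)⁻¹ ∈ A := by simpa using hkey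
      have hmul := mul_mem hval hxA
      rwa [inv_mul_cancel_right] at hmul
    · right
      refine ⟨p, hp, ?_, hcond⟩
      have ham : ∀ b ∈ B, ∃ x ∈ C, x⁻¹ * b ∈ A := by
        intro b hb
        obtain ⟨x, hx, hxa⟩ := h ⟨b, hb⟩
        rw [Subgroup.mem_subgroupOf] at hx hxa
        exact ⟨(x : G), hx, by simpa using hxa⟩
      rw [aux_relIndex_eq hAB hCB ham]
      exact hrel

lemma aux_chain_inter {G : Type*} [Group G] [Finite G] [Group.IsSolvable G] {t : ℕ}
    {X Y : Subgroup G} (h : Relation.ReflTransGen (KPtStep t) X Y) :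
    ∀ C : Subgroup G, C ≤ Y → Relation.ReflTransGen (KPtStep t) (X ⊓ C) C := by
  induction h using Relation.ReflTransGen.head_induction_on with
  | refl =>
      intro C hC
      rw [inf_eq_right.mpr hC]
  | @head X X' hstep _htail ih =>
      intro C hC
      have h1 : KPtStep t (X ⊓ (X' ⊓ C)) (X' ⊓ C) := aux_claimA hstep _ inf_le_left
      have h2 := ih C hC
      have he : X ⊓ (X' ⊓ C) = X ⊓ C := by
        rw [← inf_assoc, inf_eq_left.mpr hstep.1]
      exact Relation.ReflTransGen.head (he ▸ h1) h2

theorem stmt_8 {G : Type*} [Group G] [Finite G] [Group.IsSolvable G] (t : ℕ) (ht : 1 ≤ t)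
    (H U : Subgroup G) (hH : KPtSubnormal t H) (hU : KPtSubnormal t U) :
    KPtSubnormal t (H ⊓ U) := by
  exact (aux_chain_inter hH U le_top).trans hU
end

section
/- Let t = 3 and let G be the semidirect product of a cyclic group A of order 17 by its full automorphism group B ≅ Z_16. The subgroup H of order 2 contained in B is K-P-subnormal in G (via the chain H ⊴ B < G with |G : B| = 17) but H is not K-P_3-subnormal in G. -/
/-- One step of a `K`-`ℙ`-subnormal chain: normal or of prime index. -/
def KPStep {G : Type*} [Group G] (A B : Subgroup G) : Prop :=
  A ≤ B ∧ ((A.subgroupOf B).Normal ∨ ∃ p : ℕ, p.Prime ∧ A.relIndex B = p)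

/-- `H` is `K`-`ℙ`-subnormal in `G`. -/
def KPSubnormal {G : Type*} [Group G] (H : Subgroup G) : Prop :=
  Relation.ReflTransGen KPStep H ⊤

/-- The holomorph of `Z₁₇`: the semidirect product of a cyclic group of order 17
by its full automorphism group (which is cyclic of order 16). -/
abbrev G17 : Type :=
  SemidirectProduct (Multiplicative (ZMod 17)) (MulAut (Multiplicative (ZMod 17)))
    (MonoidHom.id (MulAut (Multiplicative (ZMod 17))))

abbrev Z := Multiplicative (ZMod 17)
abbrev A17 := MulAut Z
example : Finite Z := inferInstance
example : IsCyclic Z := inferInstance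
example : Finite A17 := inferInstance
example : Nat.card Z = 17 := by simp [Nat.card_zmod]
example : Nat.card A17 = 16 := by
  rw [IsCyclic.card_mulAut]
  simp [Nat.card_zmod, Nat.totient_prime (by norm_num : Nat.Prime 17)]
def g17Equiv : G17 ≃ Z × A17 where
  toFun g := (g.left, g.right)
  invFun p := ⟨p.1, p.2⟩
  left_inv g := rfl
  right_inv p := rfl
instance : Finite G17 := Finite.of_equiv _ g17Equiv.symm
open SemidirectProduct
lemma key (f : A17) (x : ZMod 17) :
    f (Multiplicative.ofAdd x) =
      Multiplicative.ofAdd ((f (Multiplicative.ofAdd 1)).toAdd * x) := by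
  have hx : x = x.val • (1 : ZMod 17) := by
    simp [nsmul_eq_mul, ZMod.natCast_val, ZMod.cast_id]
  calc f (Multiplicative.ofAdd x)
      = f ((Multiplicative.ofAdd (1 : ZMod 17)) ^ x.val) := by
        rw [← ofAdd_nsmul, ← hx]
    _ = (f (Multiplicative.ofAdd 1)) ^ x.val := map_pow f _ _
    _ = Multiplicative.ofAdd (x.val • (f (Multiplicative.ofAdd 1)).toAdd) := by
        rw [ofAdd_nsmul]; simp
    _ = _ := by
        rw [nsmul_eq_mul]
        congr 1
        rw [mul_comm]
        congr 1
        simp [ZMod.natCast_val, ZMod.cast_id]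
lemma aut_comm (f g : A17) : f * g = g * f := by
  ext z
  show f (g (Multiplicative.ofAdd z.toAdd)) = g (f (Multiplicative.ofAdd z.toAdd))
  rw [key g z.toAdd, key f z.toAdd,
    key f ((g (Multiplicative.ofAdd 1)).toAdd * z.toAdd),
    key g ((f (Multiplicative.ofAdd 1)).toAdd * z.toAdd)]
  exact congrArg Multiplicative.ofAdd (by ring)
lemma cardA : Nat.card (inl : Z →* G17).range = 17 := by
  have h2 : Nat.card (inl : Z →* G17).range = Nat.card Z :=
    Nat.card_congr (Equiv.ofInjective _ inl_injective).symm
  rw [h2]; simp [Nat.card_zmod]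
lemma cardB : Nat.card (inr : A17 →* G17).range = 16 := by
  have h : Nat.card A17 = 16 := by
    rw [IsCyclic.card_mulAut]
    simp [Nat.card_zmod, Nat.totient_prime (by norm_num : Nat.Prime 17)]
  have h2 : Nat.card (inr : A17 →* G17).range = Nat.card A17 :=
    Nat.card_congr (Equiv.ofInjective _ inr_injective).symm
  rw [h2, h]
lemma cardG : Nat.card G17 = 272 := by
  have h : Nat.card A17 = 16 := by
    rw [IsCyclic.card_mulAut]
    simp [Nat.card_zmod, Nat.totient_prime (by norm_num : Nat.Prime 17)]
  rw [Nat.card_congr g17Equiv, Nat.card_prod, h]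
  simp [Nat.card_zmod]
lemma mem_inl_range_of_commute (k : G17) (h : ∀ a : Z, inl a * k = k * inl a) :
    k ∈ (inl : Z →* G17).range := by
  have hr : k.right = 1 := by
    ext a
    have := congrArg SemidirectProduct.left (h a)
    simp [mul_left] at this
    show k.right a = a
    have h2 : k.left * k.right a = k.left * a := by rw [← this, mul_comm]
    exact mul_left_cancel h2
  refine ⟨k.left, ?_⟩
  conv_rhs => rw [← inl_left_mul_inr_right k]
  rw [hr, map_one, mul_one]
instance : Fact (Nat.Prime 17) := ⟨by norm_num⟩

lemma le_of_not17 {K : Subgroup G17} (h17 : 17 ∣ Nat.card K) :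
    (inl : Z →* G17).range ≤ K := by
  obtain ⟨g, hg⟩ := exists_prime_orderOf_dvd_card' (G := K) 17 h17
  have hgG : orderOf (g : G17) = 17 := by rw [Subgroup.orderOf_coe, hg]
  have h1 : orderOf (rightHom (g : G17)) ∣ 17 := by
    have := orderOf_map_dvd (rightHom : G17 →* A17) (g : G17)
    rwa [hgG] at this
  have h2 : orderOf (rightHom (g : G17)) ∣ 16 := by
    have h : Nat.card A17 = 16 := by
      rw [IsCyclic.card_mulAut]
      simp [Nat.card_zmod, Nat.totient_prime (by norm_num : Nat.Prime 17)]
    exact h ▸ orderOf_dvd_natCard _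
  have h3 : rightHom (g : G17) = 1 := by
    have h4 : orderOf (rightHom (g : G17)) ∣ Nat.gcd 17 16 := Nat.dvd_gcd h1 h2
    norm_num at h4
    simpa using h4
  have hmem : (g : G17) ∈ (inl : Z →* G17).range := by
    rw [range_inl_eq_ker_rightHom]; exact h3
  -- so inl.range ⊓ K is nontrivial, hence all of inl.range
  have hinf : (g : G17) ∈ (inl : Z →* G17).range ⊓ K := ⟨hmem, g.2⟩
  have hdvd : Nat.card ((inl : Z →* G17).range ⊓ K : Subgroup G17) ∣ 17 := by
    have := Subgroup.card_dvd_of_le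
      (inf_le_left : (inl : Z →* G17).range ⊓ K ≤ (inl : Z →* G17).range)
    rwa [cardA] at this
  have hne : ((inl : Z →* G17).range ⊓ K : Subgroup G17) ≠ ⊥ := by
    intro hbot
    rw [hbot, Subgroup.mem_bot] at hinf
    rw [hinf] at hgG; simp at hgG
  have hcard1 : Nat.card ((inl : Z →* G17).range ⊓ K : Subgroup G17) ≠ 1 := by
    intro h1; exact hne (Subgroup.card_eq_one.mp h1)
  have h17' : Nat.card ((inl : Z →* G17).range ⊓ K : Subgroup G17) = 17 :=
    (Nat.Prime.eq_one_or_self_of_dvd (by norm_num) _ hdvd).resolve_left hcard1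
  have heq : (inl : Z →* G17).range ⊓ K = (inl : Z →* G17).range :=
    Subgroup.eq_of_le_of_card_ge inf_le_left (by rw [h17', cardA])
  rw [← heq]; exact inf_le_right

lemma inf_bot {K : Subgroup G17} (h : ¬ (inl : Z →* G17).range ≤ K) :
    (inl : Z →* G17).range ⊓ K = ⊥ := by
  have hdvd : Nat.card ((inl : Z →* G17).range ⊓ K : Subgroup G17) ∣ 17 := by
    have := Subgroup.card_dvd_of_le
      (inf_le_left : (inl : Z →* G17).range ⊓ K ≤ (inl : Z →* G17).range)
    rwa [cardA] at this
  rcases (Nat.Prime.eq_one_or_self_of_dvd (by norm_num) _ hdvd) with h1 | h17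
  · exact Subgroup.card_eq_one.mp h1
  · exfalso
    apply h
    have heq : (inl : Z →* G17).range ⊓ K = (inl : Z →* G17).range :=
      Subgroup.eq_of_le_of_card_ge inf_le_left (by rw [h17, cardA])
    rw [← heq]; exact inf_le_right
lemma no_step {K L : Subgroup G17} (hKne : K ≠ ⊥) (hAK : ¬ (inl : Z →* G17).range ≤ K)
    (hstep : KPtStep 3 K L) : ¬ (inl : Z →* G17).range ≤ L := by
  intro hAL
  obtain ⟨hKL, hnorm | ⟨p, hp, hrel, hq⟩⟩ := hstep
  · -- normal case: K centralizes A, so K = ⊥, contradiction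
    apply hKne
    rw [eq_bot_iff]
    intro k hk
    have hinf : (inl : Z →* G17).range ⊓ K = ⊥ := inf_bot hAK
    have hcomm : ∀ a : Z, inl a * k = k * inl a := by
      intro a
      have haL : (inl a : G17) ∈ L := hAL ⟨a, rfl⟩
      have hconj : ((⟨inl a, haL⟩ : L)⁻¹ * ⟨k, hKL hk⟩ * ⟨inl a, haL⟩ : L) ∈
          K.subgroupOf L := by
        have h0 : (⟨k, hKL hk⟩ : L) ∈ K.subgroupOf L := by
          rw [Subgroup.mem_subgroupOf]; exact hk
        simpa using hnorm.conj_mem _ h0 (⟨inl a, haL⟩ : L)⁻¹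
      rw [Subgroup.mem_subgroupOf] at hconj
      have hconj' : (inl a)⁻¹ * k * inl a ∈ K := hconj
      have hc : k⁻¹ * ((inl a)⁻¹ * k * inl a) ∈ K := K.mul_mem (K.inv_mem hk) hconj'
      have hcA : k⁻¹ * ((inl a)⁻¹ * k * inl a) ∈ (inl : Z →* G17).range := by
        rw [range_inl_eq_ker_rightHom, MonoidHom.mem_ker]
        simp [mul_assoc]
      have : k⁻¹ * ((inl a)⁻¹ * k * inl a) ∈ (⊥ : Subgroup G17) := by
        rw [← hinf]; exact ⟨hcA, hc⟩
      rw [Subgroup.mem_bot] at this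
      have h1 : (inl a)⁻¹ * k * inl a = k := by
        exact (inv_mul_eq_one.mp this).symm
      calc inl a * k = inl a * ((inl a)⁻¹ * k * inl a) := by rw [h1]
        _ = k * inl a := by group
    have hkA : k ∈ (inl : Z →* G17).range := mem_inl_range_of_commute k hcomm
    have : k ∈ (inl : Z →* G17).range ⊓ K := ⟨hkA, hk⟩
    rw [hinf] at this
    exact this
  · -- prime index case: the index must be 17, contradiction with the P₃ condition
    have h17L : 17 ∣ Nat.card L := by
      have := Subgroup.card_dvd_of_le hAL
      rwa [cardA] at this
    have h17K : ¬ 17 ∣ Nat.card K := fun h => hAK (le_of_not17 h)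
    have hLind : L.index ≠ 0 := Subgroup.index_ne_zero_of_finite
    have hcardL : Nat.card L = Nat.card K * p := by
      have e1 : K.relIndex L * L.index = K.index := Subgroup.relIndex_mul_index hKL
      have e2 : Nat.card K * K.index = Nat.card G17 := Subgroup.card_mul_index K
      have e3 : Nat.card L * L.index = Nat.card G17 := Subgroup.card_mul_index L
      have : Nat.card K * p * L.index = Nat.card L * L.index := by
        rw [e3, ← e2, ← e1, ← hrel]; ring
      exact (Nat.eq_of_mul_eq_mul_right (Nat.pos_of_ne_zero hLind) this).symm
    have h17p : (17 : ℕ) ∣ p := by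
      rcases (Nat.Prime.dvd_mul (by norm_num)).mp (hcardL ▸ h17L) with h | h
      · exact absurd h h17K
      · exact h
    have hp17 : p = 17 := ((Nat.prime_dvd_prime_iff_eq (by norm_num) hp).mp h17p).symm
    exact hq 2 Nat.prime_two (by rw [hp17]; norm_num)

theorem stmt_10 (H : Subgroup G17)
    (hle : H ≤ SemidirectProduct.inr.range) (hcard : Nat.card H = 2) :
    KPSubnormal H ∧ ¬ KPtSubnormal 3 H := by
  constructor
  · -- positive part
    have h1 : KPStep H SemidirectProduct.inr.range := by
      refine ⟨hle, Or.inl ?_⟩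
      constructor
      intro n hn g
      have hcomm : (g : G17) * n * (g : G17)⁻¹ = n := by
        obtain ⟨a, ha⟩ := g.2
        obtain ⟨b, hb⟩ := n.2
        rw [← ha, ← hb, ← map_mul, aut_comm, map_mul, mul_assoc]
        simp
      have heq : g * n * g⁻¹ = n := Subtype.ext hcomm
      rw [heq]; exact hn
    have h2 : KPStep (SemidirectProduct.inr.range : Subgroup G17) ⊤ := by
      refine ⟨le_top, Or.inr ?_⟩
      refine ⟨17, by norm_num, ?_⟩
      rw [Subgroup.relIndex_top_right]
      have e : Nat.card SemidirectProduct.inr.range * SemidirectProduct.inr.range.index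
          = Nat.card G17 := Subgroup.card_mul_index _
      rw [cardB, cardG] at e
      omega
    exact Relation.ReflTransGen.head h1 (Relation.ReflTransGen.single h2)
  · -- negative part
    intro hsub
    have hHbot : H ≠ ⊥ := by
      intro hb; rw [hb, Subgroup.card_eq_one.mpr rfl] at hcard; omega
    have hAH : ¬ (inl : Z →* G17).range ≤ H := by
      intro hAH
      have := Subgroup.card_dvd_of_le hAH
      rw [cardA, hcard] at this
      omega
    have inv : ∀ L : Subgroup G17, Relation.ReflTransGen (KPtStep 3) H L →
        H ≤ L ∧ ¬ (inl : Z →* G17).range ≤ L := by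
      intro L hL
      induction hL with
      | refl => exact ⟨le_rfl, hAH⟩
      | tail hKL hstep ih =>
        refine ⟨ih.1.trans hstep.1, no_step ?_ ih.2 hstep⟩
        intro hb
        exact hHbot (le_bot_iff.mp (hb ▸ ih.1))
    exact (inv ⊤ hsub).2 le_top
end

section
/- Let G be a finite group with normal subgroups N_1, N_2 such that G/N_1 and G/N_2 both lie in the class H_t of groups whose Sylow subgroups are all K-P_t-subnormal, and suppose every group in H_t is soluble. Then G/(N_1 ∩ N_2) lies in H_t. -/
/-- The class `ℌ_t` of groups all of whose Sylow subgroups are `K`-`ℙ_t`-subnormal. -/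
def MemHt (t : ℕ) (G : Type*) [Group G] : Prop :=
  ∀ (p : ℕ) (P : Sylow p G), KPtSubnormal t (P : Subgroup G)

universe u

open Subgroup
open scoped commutatorElement

section AuxiliaryLemmas


/-- Coset-counting: if `N ≤ K`, `G = N * M` and `N ⊓ M = ⊥`,
then the relative index of `M ⊓ K` in `K` is the order of `N`. -/
lemma aux_relindex_eq_card {G : Type*} [Group G] {N M K : Subgroup G}
    (hNK : N ≤ K) (hdec : ∀ g : G, ∃ n ∈ N, ∃ m ∈ M, g = n * m)
    (hNM : N ⊓ M = ⊥) : (M ⊓ K).relIndex K = Nat.card N := by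
  have key : (M ⊓ K).relIndex K = Nat.card (K ⧸ (M ⊓ K).subgroupOf K) := rfl
  rw [key]
  symm
  apply Nat.card_congr
  refine Equiv.ofBijective
    (fun n => ((⟨(n : G), hNK n.2⟩ : K) : K ⧸ (M ⊓ K).subgroupOf K)) ⟨?_, ?_⟩
  · intro n₁ n₂ h
    rw [QuotientGroup.eq] at h
    have h2 : (n₁ : G)⁻¹ * n₂ ∈ M ⊓ K := h
    have h3 : (n₁ : G)⁻¹ * (n₂ : G) ∈ N ⊓ M := ⟨N.mul_mem (N.inv_mem n₁.2) n₂.2, h2.1⟩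
    rw [hNM, Subgroup.mem_bot] at h3
    exact Subtype.ext (inv_mul_eq_one.mp h3)
  · intro q
    induction q using QuotientGroup.induction_on with
    | _ k =>
      obtain ⟨n, hn, m, hm, hk⟩ := hdec (k : G)
      refine ⟨⟨n, hn⟩, ?_⟩
      have hmK : m ∈ K := by
        have : m = n⁻¹ * k := by rw [hk]; group
        rw [this]; exact K.mul_mem (K.inv_mem (hNK hn)) k.2
      rw [QuotientGroup.eq]
      show ((⟨n, hNK hn⟩ : K)⁻¹ * k : G) ∈ M ⊓ K
      refine ⟨?_, K.mul_mem (K.inv_mem (hNK hn)) k.2⟩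
      show (n : G)⁻¹ * k ∈ M
      have : (n : G)⁻¹ * k = m := by rw [hk]; group
      rw [this]; exact hm

/-- Transfer normality of a doubly-relativized subgroup back down. -/
lemma aux_transfer_normal {G : Type*} [Group G] {A K H' : Subgroup G} (hK : K ≤ H')
    (h : (((A ⊓ K).subgroupOf H').subgroupOf (K.subgroupOf H')).Normal) :
    ((A ⊓ K).subgroupOf K).Normal := by
  have hle : (A ⊓ K).subgroupOf H' ≤ K.subgroupOf H' := fun x hx => by
    rw [mem_subgroupOf] at hx ⊢; exact hx.2
  rw [normal_subgroupOf_iff hle] at h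
  refine (normal_subgroupOf_iff inf_le_right).mpr (fun x k hx hk => ?_)
  have h2 := h (⟨x, hK hx.2⟩ : H') (⟨k, hK hk⟩ : H')
    (by rw [mem_subgroupOf]; exact hx) (by rw [mem_subgroupOf]; exact hk)
  rw [mem_subgroupOf] at h2
  exact h2

/-- Commutators of a cyclic normal subgroup's normalizers centralize it. -/
lemma aux_commutator_mem_centralizer {G : Type*} [Group G] {N : Subgroup G} [hN : N.Normal]
    (hc : IsCyclic N) (k₁ k₂ : G) : ⁅k₁, k₂⁆ ∈ Subgroup.centralizer (N : Set G) := by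
  obtain ⟨g, hg⟩ := hc.exists_generator
  have conj_mem : ∀ k : G, ∀ x : G, x ∈ N → k * x * k⁻¹ ∈ N := fun k x hx => hN.conj_mem x hx k
  -- conjugation by k₁ and k₂ on the generator
  obtain ⟨m₁, hm₁⟩ := Subgroup.mem_zpowers_iff.mp (hg ⟨k₁ * g * k₁⁻¹, conj_mem k₁ g g.2⟩)
  obtain ⟨m₂, hm₂⟩ := Subgroup.mem_zpowers_iff.mp (hg ⟨k₂ * g * k₂⁻¹, conj_mem k₂ g g.2⟩)
  have hm₁' : (g : G) ^ m₁ = k₁ * g * k₁⁻¹ := by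
    have := congrArg (fun x : N => (x : G)) hm₁; simpa using this
  have hm₂' : (g : G) ^ m₂ = k₂ * g * k₂⁻¹ := by
    have := congrArg (fun x : N => (x : G)) hm₂; simpa using this
  -- conjugation of arbitrary elements
  have conj_eq : ∀ y : G, y ∈ N → (k₁ * k₂) * y * (k₁ * k₂)⁻¹ = (k₂ * k₁) * y * (k₂ * k₁)⁻¹ := by
    intro y hy
    obtain ⟨m, hm⟩ := Subgroup.mem_zpowers_iff.mp (hg ⟨y, hy⟩)
    have hm' : (g : G) ^ m = y := by
      have := congrArg (fun x : N => (x : G)) hm; simpa using this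
    have e1 : ∀ k : G, ∀ a : ℤ, k * ((g : G) ^ a) * k⁻¹ = (k * g * k⁻¹) ^ a := by
      intro k a; rw [conj_zpow]
    calc (k₁ * k₂) * y * (k₁ * k₂)⁻¹
        = k₁ * (k₂ * ((g:G) ^ m) * k₂⁻¹) * k₁⁻¹ := by rw [← hm']; group
      _ = k₁ * ((k₂ * g * k₂⁻¹) ^ m) * k₁⁻¹ := by rw [e1]
      _ = k₁ * ((g : G) ^ (m₂ * m)) * k₁⁻¹ := by rw [← hm₂', ← zpow_mul]
      _ = (k₁ * g * k₁⁻¹) ^ (m₂ * m) := by rw [e1]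
      _ = (g : G) ^ (m₁ * (m₂ * m)) := by rw [← hm₁', ← zpow_mul]
      _ = (g : G) ^ (m₂ * (m₁ * m)) := by rw [show m₁ * (m₂ * m) = m₂ * (m₁ * m) by ring]
      _ = (k₂ * g * k₂⁻¹) ^ (m₁ * m) := by rw [← hm₂', ← zpow_mul]
      _ = k₂ * ((g : G) ^ (m₁ * m)) * k₂⁻¹ := by rw [e1]
      _ = k₂ * ((k₁ * g * k₁⁻¹) ^ m) * k₂⁻¹ := by rw [← hm₁', ← zpow_mul]
      _ = k₂ * (k₁ * ((g:G) ^ m) * k₁⁻¹) * k₂⁻¹ := by rw [e1]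
      _ = (k₂ * k₁) * y * (k₂ * k₁)⁻¹ := by rw [hm']; group
  rw [Subgroup.mem_centralizer_iff]
  intro x hx
  have hx' : x ∈ N := hx
  -- y := (k₂ k₁)⁻¹ x (k₂ k₁) ∈ N
  have hy : (k₂ * k₁)⁻¹ * x * (k₂ * k₁) ∈ N := by
    have := conj_mem (k₂ * k₁)⁻¹ x hx'
    simpa using this
  have h1 := conj_eq _ hy
  -- (k₁k₂) ((k₂k₁)⁻¹ x (k₂k₁)) (k₁k₂)⁻¹ = x
  have h2 : (k₁ * k₂) * ((k₂ * k₁)⁻¹ * x * (k₂ * k₁)) * (k₁ * k₂)⁻¹ = x := by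
    rw [h1]; group
  have h3 : ⁅k₁, k₂⁆ * x * ⁅k₁, k₂⁆⁻¹ = x := by
    rw [commutatorElement_def]
    calc k₁ * k₂ * k₁⁻¹ * k₂⁻¹ * x * (k₁ * k₂ * k₁⁻¹ * k₂⁻¹)⁻¹
        = (k₁ * k₂) * ((k₂ * k₁)⁻¹ * x * (k₂ * k₁)) * (k₁ * k₂)⁻¹ := by group
      _ = x := h2
  calc x * ⁅k₁, k₂⁆ = (⁅k₁, k₂⁆ * x * ⁅k₁, k₂⁆⁻¹) * ⁅k₁, k₂⁆ := by rw [h3]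
    _ = ⁅k₁, k₂⁆ * x := by group

lemma aux_exists_minimal_normal (G : Type*) [Group G] [Finite G] [Nontrivial G] :
    ∃ N : Subgroup G, N.Normal ∧ N ≠ ⊥ ∧
      ∀ N' : Subgroup G, N'.Normal → N' ≠ ⊥ → N' ≤ N → N' = N := by
  have main : ∀ (n : ℕ) (N : Subgroup G), N.Normal → N ≠ ⊥ → Nat.card N ≤ n →
      ∃ N₀ : Subgroup G, N₀ ≤ N ∧ N₀.Normal ∧ N₀ ≠ ⊥ ∧
        ∀ N' : Subgroup G, N'.Normal → N' ≠ ⊥ → N' ≤ N₀ → N' = N₀ := by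
    intro n
    induction n with
    | zero => intro N _ _ hcard; have := Nat.card_pos (α := N); omega
    | succ n IH =>
      intro N hN hNbot hcard
      by_cases h : ∃ N' : Subgroup G, N'.Normal ∧ N' ≠ ⊥ ∧ N' ≤ N ∧ N' ≠ N
      · obtain ⟨N', h1, h2, h3, h4⟩ := h
        have hlt : Nat.card N' < Nat.card N := by
          have hle : Nat.card N' ≤ Nat.card N := Subgroup.card_le_of_le h3
          rcases lt_or_eq_of_le hle with h | h
          · exact h
          · exact absurd (Subgroup.eq_of_le_of_card_ge h3 h.ge) h4
        obtain ⟨N₀, hle, hrest⟩ := IH N' h1 h2 (by omega)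
        exact ⟨N₀, hle.trans h3, hrest⟩
      · push_neg at h
        exact ⟨N, le_rfl, hN, hNbot, fun N' h1 h2 h3 => h N' h1 h2 h3⟩
  obtain ⟨N₀, _, h⟩ := main (Nat.card G) ⊤ inferInstance
    (by intro h; rw [Subgroup.eq_bot_iff_forall] at h; obtain ⟨x, hx⟩ := exists_ne (1 : G); exact hx (h x trivial))
    (Nat.card_le_card_of_injective _ (Subgroup.subtype_injective ⊤))
  exact ⟨N₀, h⟩

lemma aux_minimal_normal_comm {G : Type*} [Group G] [Group.IsSolvable G] {N : Subgroup G}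
    (hN : N.Normal) (hbot : N ≠ ⊥)
    (hmin : ∀ N' : Subgroup G, N'.Normal → N' ≠ ⊥ → N' ≤ N → N' = N) :
    ∀ x ∈ N, ∀ y ∈ N, x * y = y * x := by
  haveI := hN
  by_cases hc : ⁅N, N⁆ = ⊥
  · intro x hx y hy
    have h1 : ⁅x, y⁆ ∈ ⁅N, N⁆ := Subgroup.commutator_mem_commutator hx hy
    rw [hc, Subgroup.mem_bot] at h1
    exact commutatorElement_eq_one_iff_mul_comm.mp h1
  · exfalso
    have hle : ⁅N, N⁆ ≤ N := Subgroup.commutator_le_left N N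
    have heq : ⁅N, N⁆ = N := hmin _ inferInstance hc hle
    have hd : ∀ n, N ≤ derivedSeries G n := by
      intro n
      induction n with
      | zero => exact le_top
      | succ n ih =>
        rw [derivedSeries_succ]
        calc N = ⁅N, N⁆ := heq.symm
          _ ≤ ⁅derivedSeries G n, derivedSeries G n⁆ := Subgroup.commutator_mono ih ih
    obtain ⟨n, hn⟩ := Group.IsSolvable.solvable (G := G)
    exact hbot (le_bot_iff.mp (hn ▸ hd n))


/-- In a finite soluble group, the intersection of a subgroup of prime index `p`
with any subgroup `K` is normal in `K` or of relative index `p` in `K`. -/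
lemma aux_star : ∀ (n : ℕ) (G : Type u) [Group G] [Finite G], Nat.card G ≤ n →
    Group.IsSolvable G → ∀ (M K : Subgroup G) (p : ℕ), p.Prime → M.index = p →
    ((M ⊓ K).subgroupOf K).Normal ∨ (M ⊓ K).relIndex K = p := by
  intro n
  induction n with
  | zero =>
    intro G _ _ hcard
    have := Nat.card_pos (α := G); omega
  | succ n IH =>
    intro G _ _ hcard hsol M K p hp hidx
    by_cases hA : ∃ N : Subgroup G, N.Normal ∧ N ≠ ⊥ ∧ N ≤ M
    -- Case A: quotient induction
    · obtain ⟨N, hNn, hNbot, hNM⟩ := hA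
      haveI := hNn
      set π := QuotientGroup.mk' N with hπ
      have hπs : Function.Surjective π := QuotientGroup.mk'_surjective N
      have hker : π.ker = N := QuotientGroup.ker_mk' N
      have hcard' : Nat.card (G ⧸ N) ≤ n := by
        have h1 := Subgroup.card_eq_card_quotient_mul_card_subgroup N
        have h2 : 1 < Nat.card N := (Subgroup.one_lt_card_iff_ne_bot N).mpr hNbot
        have h3 : 0 < Nat.card (G ⧸ N) := Nat.card_pos
        have h4 : Nat.card (G ⧸ N) * 2 ≤ Nat.card (G ⧸ N) * Nat.card N :=
          Nat.mul_le_mul_left _ h2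
        omega
      have hkerle : π.ker ≤ M := by rw [hker]; exact hNM
      have hidx' : (M.map π).index = p := by
        exact (Subgroup.index_map_eq M hπs hkerle).trans hidx
      have hcomap : (M.map π).comap π = M := by
        rw [Subgroup.comap_map_eq, hker, sup_of_le_left hNM]
      rcases IH (G ⧸ N) hcard' inferInstance (M.map π) (K.map π) p hp hidx' with h | h
      · left
        rw [normal_subgroupOf_iff inf_le_right] at h ⊢
        intro x k hx hk
        refine ⟨?_, K.mul_mem (K.mul_mem hk hx.2) (K.inv_mem hk)⟩
        have h1 := h (π x) (π k)
          ⟨Subgroup.mem_map_of_mem π hx.1, Subgroup.mem_map_of_mem π hx.2⟩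
          (Subgroup.mem_map_of_mem π hk)
        have h2 : π (k * x * k⁻¹) ∈ M.map π := by
          simpa [map_mul, map_inv] using h1.1
        have h3 : k * x * k⁻¹ ∈ (M.map π).comap π := h2
        rwa [hcomap] at h3
      · right
        rw [inf_relIndex_right] at h ⊢
        calc M.relIndex K = ((M.map π).comap π).relIndex K := by rw [hcomap]
          _ = (M.map π).relIndex (K.map π) := Subgroup.relIndex_comap (H := M.map π) π K
          _ = p := h
    -- Case B
    · push_neg at hA
      have hMne : M ≠ ⊤ := by
        intro h; rw [h, Subgroup.index_top] at hidx; exact hp.ne_one hidx.symm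
      have hnt : Nontrivial G := by
        rcases subsingleton_or_nontrivial G with h | h
        · exact absurd (Subsingleton.elim M ⊤) hMne
        · exact h
      obtain ⟨N, hNn, hNbot, hNmin⟩ := aux_exists_minimal_normal G
      haveI := hNn
      have hNM : ¬ N ≤ M := hA N hNn hNbot
      have hcomm := aux_minimal_normal_comm hNn hNbot hNmin
      have hmax : ∀ L : Subgroup G, M ≤ L → L = M ∨ L = ⊤ := by
        intro L hML
        have h1 : M.relIndex L * L.index = p := by
          rw [Subgroup.relIndex_mul_index hML, hidx]
        rcases (hp.eq_one_or_self_of_dvd L.index ⟨M.relIndex L, by rw [← h1]; ring⟩) with h | h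
        · right; exact Subgroup.index_eq_one.mp h
        · left
          have h2 : M.relIndex L = 1 := by
            have := h1; rw [h] at this
            exact Nat.eq_of_mul_eq_mul_right hp.pos (by rw [one_mul]; exact this)
          exact le_antisymm (Subgroup.relIndex_eq_one.mp h2) hML
      have hsupNM : N ⊔ M = ⊤ := by
        rcases hmax (N ⊔ M) le_sup_right with h | h
        · exact absurd (le_sup_left.trans h.le) hNM
        · exact h
      have hdec : ∀ g : G, ∃ n ∈ N, ∃ m ∈ M, g = n * m := by
        intro g
        have h1 : g ∈ (↑(N ⊔ M) : Set G) := by rw [hsupNM]; trivial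
        rw [Subgroup.normal_mul] at h1
        obtain ⟨x, hx, y, hy, h⟩ := h1
        exact ⟨x, hx, y, hy, h.symm⟩
      have hNMnormal : (N ⊓ M).Normal := by
        constructor
        intro x hx g
        obtain ⟨n₀, hn₀, m₀, hm₀, rfl⟩ := hdec g
        have h1 : m₀ * x * m₀⁻¹ ∈ N ⊓ M :=
          ⟨hNn.conj_mem x hx.1 m₀, M.mul_mem (M.mul_mem hm₀ hx.2) (M.inv_mem hm₀)⟩
        have h2 : n₀ * (m₀ * x * m₀⁻¹) * n₀⁻¹ = m₀ * x * m₀⁻¹ := by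
          have h3 := hcomm _ h1.1 _ hn₀
          rw [← h3]; group
        have h4 : n₀ * m₀ * x * (n₀ * m₀)⁻¹ = n₀ * (m₀ * x * m₀⁻¹) * n₀⁻¹ := by group
        rw [h4, h2]; exact h1
      have hNMbot : N ⊓ M = ⊥ := by
        by_contra h
        exact hA (N ⊓ M) hNMnormal h inf_le_right
      have hcardN : Nat.card N = p := by
        have h := aux_relindex_eq_card (le_top : N ≤ ⊤) hdec hNMbot
        rw [inf_top_eq, relIndex_top_right, hidx] at h
        exact h.symm
      by_cases hNK : N ≤ K
      · right
        rw [aux_relindex_eq_card hNK hdec hNMbot, hcardN]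
      · have hNKbot : N ⊓ K = ⊥ := by
          by_contra h
          have hcd : Nat.card (↥(N ⊓ K)) ∣ Nat.card N := Subgroup.card_dvd_of_le inf_le_left
          rw [hcardN] at hcd
          rcases hp.eq_one_or_self_of_dvd _ hcd with h1 | h1
          · exact h (Subgroup.card_eq_one.mp h1)
          · have h2 : N ⊓ K = N :=
              Subgroup.eq_of_le_of_card_ge inf_le_left (by rw [hcardN, h1])
            exact hNK (by rw [← h2]; exact inf_le_right)
        by_cases hKN : K ⊔ N = ⊤
        -- final case: K is abelian
        · left
          set C := Subgroup.centralizer (N : Set G) with hC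
          have hCn : C.Normal := by
            constructor
            intro c hc g
            rw [hC, Subgroup.mem_centralizer_iff] at hc ⊢
            intro x hx
            have hx' : g⁻¹ * x * g ∈ N := by
              have := hNn.conj_mem x hx g⁻¹; simpa using this
            have h1 := hc _ hx'
            calc x * (g * c * g⁻¹) = g * ((g⁻¹ * x * g) * c) * g⁻¹ := by group
              _ = g * (c * (g⁻¹ * x * g)) * g⁻¹ := by rw [h1]
              _ = (g * c * g⁻¹) * x := by group
          have hNC : N ≤ C := by
            intro x hx
            rw [hC, Subgroup.mem_centralizer_iff]
            intro y hy
            exact hcomm y hy x hx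
          have hCMn : (C ⊓ M).Normal := by
            constructor
            intro x hx g
            obtain ⟨n₀, hn₀, m₀, hm₀, rfl⟩ := hdec g
            have h1 : m₀ * x * m₀⁻¹ ∈ C ⊓ M :=
              ⟨hCn.conj_mem x hx.1 m₀, M.mul_mem (M.mul_mem hm₀ hx.2) (M.inv_mem hm₀)⟩
            have h3 := Subgroup.mem_centralizer_iff.mp h1.1 n₀ hn₀
            have h2 : n₀ * (m₀ * x * m₀⁻¹) * n₀⁻¹ = m₀ * x * m₀⁻¹ := by
              rw [h3]; group
            have h4 : n₀ * m₀ * x * (n₀ * m₀)⁻¹ = n₀ * (m₀ * x * m₀⁻¹) * n₀⁻¹ := by group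
            rw [h4, h2]; exact h1
          have hCMbot : C ⊓ M = ⊥ := by
            by_contra h
            exact hA (C ⊓ M) hCMn h inf_le_right
          have hCN : C = N := by
            have hinj : Function.Injective
                (fun c : C => ((c : G) : G ⧸ M)) := by
              intro c₁ c₂ h
              simp only [QuotientGroup.eq] at h
              have h1 : (c₁ : G)⁻¹ * c₂ ∈ C ⊓ M := ⟨C.mul_mem (C.inv_mem c₁.2) c₂.2, h⟩
              rw [hCMbot, Subgroup.mem_bot] at h1
              exact Subtype.ext (inv_mul_eq_one.mp h1)
            have hle : Nat.card C ≤ Nat.card (G ⧸ M) := Nat.card_le_card_of_injective _ hinj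
            have hip : Nat.card (G ⧸ M) = p := hidx
            have hge : Nat.card N ≤ Nat.card C := Subgroup.card_le_of_le hNC
            exact (Subgroup.eq_of_le_of_card_ge hNC (by omega)).symm
          have hcyc : IsCyclic N := by
            haveI : Fact p.Prime := ⟨hp⟩
            exact isCyclic_of_prime_card hcardN
          have hKcomm : ∀ k₁ ∈ K, ∀ k₂ ∈ K, k₁ * k₂ = k₂ * k₁ := by
            intro k₁ hk₁ k₂ hk₂
            have hmem : ⁅k₁, k₂⁆ ∈ C := aux_commutator_mem_centralizer hcyc k₁ k₂
            have hmemK : ⁅k₁, k₂⁆ ∈ K := by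
              rw [commutatorElement_def]
              exact K.mul_mem (K.mul_mem (K.mul_mem hk₁ hk₂) (K.inv_mem hk₁)) (K.inv_mem hk₂)
            have h1 : ⁅k₁, k₂⁆ ∈ N ⊓ K := ⟨by rw [← hCN]; exact hmem, hmemK⟩
            rw [hNKbot, Subgroup.mem_bot] at h1
            exact commutatorElement_eq_one_iff_mul_comm.mp h1
          refine (normal_subgroupOf_iff inf_le_right).mpr (fun x k hx hk => ?_)
          have h1 : k * x * k⁻¹ = x := by
            have := hKcomm k hk x hx.2
            rw [this]; group
          rw [h1]; exact hx
        -- subgroup induction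
        · set H := K ⊔ N with hH
          have hNH : N ≤ H := le_sup_right
          have hKH : K ≤ H := le_sup_left
          have hcardH : Nat.card H ≤ n := by
            have h1 := Subgroup.card_eq_card_quotient_mul_card_subgroup H
            have h2 : H.index ≠ 1 := fun h => hKN (Subgroup.index_eq_one.mp h)
            have h3 : 0 < Nat.card H := Nat.card_pos
            have h4 : H.index ≠ 0 := Subgroup.index_ne_zero_of_finite
            have h5 : H.index = Nat.card (G ⧸ H) := rfl
            have h6 : 2 * Nat.card H ≤ Nat.card (G ⧸ H) * Nat.card H :=
              Nat.mul_le_mul_right _ (by omega)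
            omega
          have hidxH : (M.subgroupOf H).index = p := by
            have h1 : (M ⊓ H).relIndex H = Nat.card N := aux_relindex_eq_card hNH hdec hNMbot
            rw [inf_relIndex_right] at h1
            rw [hcardN] at h1
            exact h1
          have hinf : (M.subgroupOf H) ⊓ (K.subgroupOf H) = (M ⊓ K).subgroupOf H :=
            (Subgroup.comap_inf M K H.subtype).symm
          rcases IH H hcardH inferInstance (M.subgroupOf H) (K.subgroupOf H) p hp hidxH
            with h | h
          · left
            rw [hinf] at h
            exact aux_transfer_normal hKH h
          · right
            rw [hinf, Subgroup.relIndex_subgroupOf hKH] at h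
            exact h





/-- One-step intersection lemma. -/
lemma aux_step {G : Type u} [Group G] [Finite G] (hsol : IsSolvable G) {t : ℕ}
    {H H' : Subgroup G} (hstep : KPtStep t H H') {K : Subgroup G} (hK : K ≤ H') :
    Relation.ReflTransGen (KPtStep t) (H ⊓ K) K := by
  haveI : Group.IsSolvable G := hsol
  obtain ⟨hle, hcase⟩ := hstep
  rcases hcase with hnorm | ⟨p, hp, hidx, hq⟩
  · refine Relation.ReflTransGen.single ⟨inf_le_right, Or.inl ?_⟩
    refine (normal_subgroupOf_iff inf_le_right).mpr (fun x k hx hk => ?_)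
    exact ⟨(normal_subgroupOf_iff hle).mp hnorm x k hx.1 (hK hk),
      K.mul_mem (K.mul_mem hk hx.2) (K.inv_mem hk)⟩
  · have hidx' : (H.subgroupOf H').index = p := hidx
    have hstar := aux_star (Nat.card H') H' le_rfl inferInstance
      (H.subgroupOf H') (K.subgroupOf H') p hp hidx'
    have hinf : (H.subgroupOf H') ⊓ (K.subgroupOf H') = (H ⊓ K).subgroupOf H' :=
      (Subgroup.comap_inf H K H'.subtype).symm
    rcases hstar with h | h
    · rw [hinf] at h
      exact Relation.ReflTransGen.single
        ⟨inf_le_right, Or.inl (aux_transfer_normal hK h)⟩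
    · rw [hinf, Subgroup.relIndex_subgroupOf hK] at h
      exact Relation.ReflTransGen.single ⟨inf_le_right, Or.inr ⟨p, hp, h, hq⟩⟩

/-- Intersection lemma for `K`-`ℙ_t`-subnormal chains in finite soluble groups. -/
lemma aux_ML {G : Type u} [Group G] [Finite G] (hsol : IsSolvable G) {t : ℕ}
    {H T : Subgroup G} (hc : Relation.ReflTransGen (KPtStep t) H T) :
    ∀ K : Subgroup G, K ≤ T → Relation.ReflTransGen (KPtStep t) (H ⊓ K) K := by
  induction hc using Relation.ReflTransGen.head_induction_on with
  | refl =>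
    intro K hK
    rw [inf_eq_right.mpr hK]
  | @head a c hstep hchain IH =>
    intro K hK
    have h1 : Relation.ReflTransGen (KPtStep t) (a ⊓ (c ⊓ K)) (c ⊓ K) :=
      aux_step hsol hstep inf_le_left
    have h2 : a ⊓ (c ⊓ K) = a ⊓ K := by
      rw [← inf_assoc, inf_of_le_left hstep.1]
    rw [h2] at h1
    exact h1.trans (IH K hK)

/-- Pulling back a chain along a surjective homomorphism. -/
lemma aux_pull {A B : Type*} [Group A] [Group B] {f : A →* B} (hf : Function.Surjective f)
    {t : ℕ} {H T : Subgroup B} (hc : Relation.ReflTransGen (KPtStep t) H T) :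
    Relation.ReflTransGen (KPtStep t) (H.comap f) (T.comap f) := by
  induction hc with
  | refl => exact .refl
  | @tail b c hchain hstep IH =>
    refine IH.tail ⟨Subgroup.comap_mono hstep.1, ?_⟩
    rcases hstep.2 with hnorm | ⟨p, hp, hidx, hq⟩
    · left
      rw [normal_subgroupOf_iff (Subgroup.comap_mono (f := f) hstep.1)]
      intro x k hx hk
      have h1 := (normal_subgroupOf_iff hstep.1).mp hnorm (f x) (f k) hx hk
      show f (k * x * k⁻¹) ∈ b
      simpa [map_mul, map_inv] using h1
    · right
      refine ⟨p, hp, ?_, hq⟩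
      rw [Subgroup.relIndex_comap, Subgroup.map_comap_eq_self_of_surjective hf]
      exact hidx

/-- `MemHt` transfers across isomorphisms. -/
lemma aux_memHt_iso {X Y : Type*} [Group X] [Group Y] (e : X ≃* Y) {t : ℕ}
    (h : MemHt t X) : MemHt t Y := by
  intro p P
  have hP : IsPGroup p (P : Subgroup Y) := P.2
  have hQ : IsPGroup p ((P : Subgroup Y).comap e.toMonoidHom) :=
    hP.comap_of_injective e.toMonoidHom e.injective
  have hmap : ((P : Subgroup Y).comap e.toMonoidHom).map e.toMonoidHom = P :=
    Subgroup.map_comap_eq_self_of_surjective e.surjective _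
  have hmax : ∀ {R : Subgroup X}, IsPGroup p R →
      (P : Subgroup Y).comap e.toMonoidHom ≤ R → R = (P : Subgroup Y).comap e.toMonoidHom := by
    intro R hR hle
    have h1 : IsPGroup p (R.map e.toMonoidHom) := hR.map e.toMonoidHom
    have h2 : (P : Subgroup Y) ≤ R.map e.toMonoidHom := by
      rw [← hmap]; exact Subgroup.map_mono hle
    have h3 := P.3 h1 h2
    calc R = (R.map e.toMonoidHom).comap e.toMonoidHom :=
          (Subgroup.comap_map_eq_self_of_injective e.injective R).symm
      _ = (P : Subgroup Y).comap e.toMonoidHom := by rw [h3]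
  have hchain := h p ⟨(P : Subgroup Y).comap e.toMonoidHom, hQ, hmax⟩
  have hpull := aux_pull (f := e.symm.toMonoidHom) e.symm.surjective hchain
  have h1 : ((P : Subgroup Y).comap e.toMonoidHom).comap e.symm.toMonoidHom = P := by
    ext y
    simp [Subgroup.mem_comap]
  have h2 : ((⊤ : Subgroup X)).comap e.symm.toMonoidHom = ⊤ := by
    ext y; simp
  rw [h1, h2] at hpull
  exact hpull

end AuxiliaryLemmas

theorem stmt_14 {G : Type u} [Group G] [Finite G] (t : ℕ) (ht : 1 ≤ t)
    (N₁ N₂ : Subgroup G) [N₁.Normal] [N₂.Normal]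
    (h1 : MemHt t (G ⧸ N₁)) (h2 : MemHt t (G ⧸ N₂))
    (hsol : ∀ (X : Type u) [Group X] [Finite X], MemHt t X → IsSolvable X) :
    MemHt t (G ⧸ (N₁ ⊓ N₂)) := by
  intro p P
  set D : Subgroup G := N₁ ⊓ N₂ with hD
  set π : G →* G ⧸ D := QuotientGroup.mk' D with hπdef
  set Nb₁ : Subgroup (G ⧸ D) := N₁.map π with hNb₁
  set Nb₂ : Subgroup (G ⧸ D) := N₂.map π with hNb₂
  haveI : Nb₁.Normal := Subgroup.Normal.map inferInstance π (QuotientGroup.mk'_surjective D)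
  haveI : Nb₂.Normal := Subgroup.Normal.map inferInstance π (QuotientGroup.mk'_surjective D)
  haveI hS1 : Group.IsSolvable (G ⧸ N₁) := hsol _ h1
  haveI hS2 : Group.IsSolvable (G ⧸ N₂) := hsol _ h2
  -- solvability of G ⧸ D
  have hψker : ∀ g ∈ D, ((QuotientGroup.mk' N₁).prod (QuotientGroup.mk' N₂)) g = 1 := by
    intro g hg
    have e1 : (g : G ⧸ N₁) = 1 := (QuotientGroup.eq_one_iff g).mpr hg.1
    have e2 : (g : G ⧸ N₂) = 1 := (QuotientGroup.eq_one_iff g).mpr hg.2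
    exact Prod.ext e1 e2
  have hsolD : IsSolvable (G ⧸ D) := by
    set φ := QuotientGroup.lift D ((QuotientGroup.mk' N₁).prod (QuotientGroup.mk' N₂)) hψker
      with hφ
    have hinj : Function.Injective φ := by
      rw [injective_iff_map_eq_one]
      intro a ha
      obtain ⟨g, rfl⟩ := QuotientGroup.mk'_surjective D a
      have hg : ((QuotientGroup.mk' N₁).prod (QuotientGroup.mk' N₂)) g = 1 := ha
      have hg1 : g ∈ N₁ := (QuotientGroup.eq_one_iff g).mp (congrArg Prod.fst hg)
      have hg2 : g ∈ N₂ := (QuotientGroup.eq_one_iff g).mp (congrArg Prod.snd hg)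
      exact (QuotientGroup.eq_one_iff g).mpr ⟨hg1, hg2⟩
    exact solvable_of_solvable_injective hinj
  -- Nb₁ ⊓ Nb₂ = ⊥
  have hNb : Nb₁ ⊓ Nb₂ = ⊥ := by
    rw [eq_bot_iff]
    rintro x ⟨hx1, hx2⟩
    obtain ⟨n₁, hn₁, rfl⟩ := hx1
    obtain ⟨n₂, hn₂, he⟩ := hx2
    have hker : π (n₂⁻¹ * n₁) = 1 := by
      rw [map_mul, map_inv, he]; group
    have hmem : n₂⁻¹ * n₁ ∈ D := (QuotientGroup.eq_one_iff _).mp hker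
    have hn₁2 : n₁ ∈ N₂ := by
      have : n₂ * (n₂⁻¹ * n₁) = n₁ := by group
      rw [← this]; exact N₂.mul_mem hn₂ hmem.2
    have : n₁ ∈ D := ⟨hn₁, hn₁2⟩
    rw [Subgroup.mem_bot]
    exact (QuotientGroup.eq_one_iff _).mpr this
  -- the two quotients of G⧸D are in H_t
  have e₁ : (G ⧸ D) ⧸ Nb₁ ≃* G ⧸ N₁ :=
    QuotientGroup.quotientQuotientEquivQuotient D N₁ inf_le_left
  have e₂ : (G ⧸ D) ⧸ Nb₂ ≃* G ⧸ N₂ :=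
    QuotientGroup.quotientQuotientEquivQuotient D N₂ inf_le_right
  have hHt1 : MemHt t ((G ⧸ D) ⧸ Nb₁) := aux_memHt_iso e₁.symm h1
  have hHt2 : MemHt t ((G ⧸ D) ⧸ Nb₂) := aux_memHt_iso e₂.symm h2
  -- Sylow overgroups of the images of P
  set ρ₁ : (G ⧸ D) →* (G ⧸ D) ⧸ Nb₁ := QuotientGroup.mk' Nb₁ with hρ₁
  set ρ₂ : (G ⧸ D) →* (G ⧸ D) ⧸ Nb₂ := QuotientGroup.mk' Nb₂ with hρ₂
  obtain ⟨Qt₁, hQt₁⟩ := (P.2.map ρ₁).exists_le_sylow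
  obtain ⟨Qt₂, hQt₂⟩ := (P.2.map ρ₂).exists_le_sylow
  set Q₁ : Subgroup (G ⧸ D) := (Qt₁ : Subgroup _).comap ρ₁ with hQ₁
  set Q₂ : Subgroup (G ⧸ D) := (Qt₂ : Subgroup _).comap ρ₂ with hQ₂
  have hchain₁ : Relation.ReflTransGen (KPtStep t) Q₁ ⊤ := by
    have h := aux_pull (QuotientGroup.mk'_surjective Nb₁) (hHt1 p Qt₁)
    rwa [Subgroup.comap_top] at h
  have hchain₂ : Relation.ReflTransGen (KPtStep t) Q₂ ⊤ := by
    have h := aux_pull (QuotientGroup.mk'_surjective Nb₂) (hHt2 p Qt₂)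
    rwa [Subgroup.comap_top] at h
  have hPQ₁ : (P : Subgroup (G ⧸ D)) ≤ Q₁ := fun x hx => hQt₁ (Subgroup.mem_map_of_mem ρ₁ hx)
  have hPQ₂ : (P : Subgroup (G ⧸ D)) ≤ Q₂ := fun x hx => hQt₂ (Subgroup.mem_map_of_mem ρ₂ hx)
  -- Q₁ ⊓ Q₂ is a p-group
  have hpg : IsPGroup p ↥(Q₁ ⊓ Q₂) := by
    intro x
    obtain ⟨k₁, hk₁⟩ := Qt₁.2 ⟨ρ₁ x, x.2.1⟩
    obtain ⟨k₂, hk₂⟩ := Qt₂.2 ⟨ρ₂ x, x.2.2⟩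
    refine ⟨k₁ + k₂, ?_⟩
    have hc₁ : ρ₁ ((x : G ⧸ D) ^ p ^ k₁) = 1 := by
      have := congrArg (fun y : (Qt₁ : Subgroup ((G ⧸ D) ⧸ Nb₁)) => (y : (G ⧸ D) ⧸ Nb₁)) hk₁
      simpa [map_pow] using this
    have hc₂ : ρ₂ ((x : G ⧸ D) ^ p ^ k₂) = 1 := by
      have := congrArg (fun y : (Qt₂ : Subgroup ((G ⧸ D) ⧸ Nb₂)) => (y : (G ⧸ D) ⧸ Nb₂)) hk₂
      simpa [map_pow] using this
    have hx1 : (x : G ⧸ D) ^ p ^ k₁ ∈ Nb₁ := (QuotientGroup.eq_one_iff _).mp hc₁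
    have hx2 : (x : G ⧸ D) ^ p ^ k₂ ∈ Nb₂ := (QuotientGroup.eq_one_iff _).mp hc₂
    have hm1 : (x : G ⧸ D) ^ p ^ (k₁ + k₂) ∈ Nb₁ := by
      rw [pow_add, pow_mul]; exact Subgroup.pow_mem _ hx1 _
    have hm2 : (x : G ⧸ D) ^ p ^ (k₁ + k₂) ∈ Nb₂ := by
      rw [pow_add, Nat.mul_comm, pow_mul]; exact Subgroup.pow_mem _ hx2 _
    have hone : (x : G ⧸ D) ^ p ^ (k₁ + k₂) = 1 := by
      have hmm : (x : G ⧸ D) ^ p ^ (k₁ + k₂) ∈ Nb₁ ⊓ Nb₂ := ⟨hm1, hm2⟩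
      rw [hNb, Subgroup.mem_bot] at hmm
      exact hmm
    exact Subtype.ext (by push_cast; exact hone)
  have hQP : Q₁ ⊓ Q₂ = P := P.3 hpg (le_inf hPQ₁ hPQ₂)
  have hml := aux_ML hsolD hchain₁ Q₂ le_top
  rw [hQP] at hml
  exact hml.trans hchain₂
end

section
/- Let t = 1 and let G be the nonabelian group of order 39. The Sylow 3-subgroup H of G is U_1-subnormal in G (since G ∈ U_1, the U_1-residual of G is trivial), but H is not K-P_1-subnormal in G. -/
/-- A group is supersoluble if it has a chain of normal subgroups from `⊥` to `⊤`
whose successive factors are cyclic (each term is generated by its predecessor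
together with one extra element). -/
def IsSupersoluble (G : Type*) [Group G] : Prop :=
  ∃ (n : ℕ) (s : Fin (n + 1) → Subgroup G),
    Monotone s ∧ s 0 = ⊥ ∧ s (Fin.last n) = ⊤ ∧
    (∀ i, (s i).Normal) ∧
    ∀ i : Fin n, ∃ x : G, s i.succ = s i.castSucc ⊔ Subgroup.zpowers x

/-- Membership in the class `𝔘_t`: supersoluble with exponent not divisible by
the `(t+1)`-th power of any prime. -/
def MemUt (t : ℕ) (G : Type*) [Group G] : Prop :=
  IsSupersoluble G ∧ ∀ p : ℕ, p.Prime → ¬ p ^ (t + 1) ∣ Monoid.exponent G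

/-- Auxiliary: the quotient `G ⧸ N` lies in `𝔘_t`. -/
def QuotMemUt (t : ℕ) {G : Type*} [Group G] (N : Subgroup G) [N.Normal] : Prop :=
  MemUt t (G ⧸ N)

/-- The `𝔘_t`-residual of `G`: the smallest normal subgroup with quotient in `𝔘_t`. -/
noncomputable def UtResidual (t : ℕ) (G : Type*) [Group G] : Subgroup G :=
  sInf {N : Subgroup G | ∃ h : N.Normal, @QuotMemUt t G _ N h}

/-- One step of a `𝔘_t`-subnormal chain: `A ≤ B` and the `𝔘_t`-residual of `B`
is contained in `A`. -/
def UtStep (t : ℕ) {G : Type*} [Group G] (A B : Subgroup G) : Prop :=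
  A ≤ B ∧ (UtResidual t B).map B.subtype ≤ A

/-- `H` is `𝔘_t`-subnormal in `G` if there is a chain
`H = H₀ ≤ H₁ ≤ ⋯ ≤ Hₙ = G` with `Hᵢ^{𝔘_t} ≤ H_{i-1}` for each `i`. -/
def UtSubnormal (t : ℕ) {G : Type*} [Group G] (H : Subgroup G) : Prop :=
  Relation.ReflTransGen (UtStep t) H ⊤

lemma isSupersoluble_of_mulEquiv {G G' : Type*} [Group G] [Group G'] (e : G ≃* G')
    (h : IsSupersoluble G) : IsSupersoluble G' := by
  obtain ⟨n, s, hmono, h0, hlast, hnorm, hstep⟩ := h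
  refine ⟨n, fun i => (s i).map e.toMonoidHom,
    fun i j hij => Subgroup.map_mono (hmono hij), ?_, ?_, ?_, ?_⟩
  · show Subgroup.map e.toMonoidHom (s 0) = ⊥
    rw [h0, Subgroup.map_bot]
  · show Subgroup.map e.toMonoidHom (s (Fin.last n)) = ⊤
    rw [hlast, Subgroup.map_top_of_surjective _ e.surjective]
  · intro i; exact (hnorm i).map _ e.surjective
  · intro i
    obtain ⟨x, hx⟩ := hstep i
    refine ⟨e x, ?_⟩
    show Subgroup.map e.toMonoidHom (s i.succ)
      = Subgroup.map e.toMonoidHom (s i.castSucc) ⊔ Subgroup.zpowers (e x)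
    rw [hx, Subgroup.map_sup, MonoidHom.map_zpowers]
    rfl

lemma memUt_of_mulEquiv {t : ℕ} {G G' : Type*} [Group G] [Group G'] (e : G ≃* G')
    (h : MemUt t G) : MemUt t G' :=
  ⟨isSupersoluble_of_mulEquiv e h.1, by
    rw [← Monoid.exponent_eq_of_mulEquiv e]; exact h.2⟩

theorem stmt_19 {G : Type*} [Group G] [Finite G]
    (hcard : Nat.card G = 39) (hnab : ¬ ∀ a b : G, a * b = b * a)
    (H : Sylow 3 G) :
    UtSubnormal 1 (H : Subgroup G) ∧ ¬ KPtSubnormal 1 (H : Subgroup G) := by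
  haveI f3 : Fact (Nat.Prime 3) := ⟨by norm_num⟩
  haveI f13 : Fact (Nat.Prime 13) := ⟨by norm_num⟩
  have cardH : Nat.card (H : Subgroup G) = 3 := by
    rw [Sylow.card_eq_multiplicity, hcard]
    rw [show (39:ℕ) = 3 * 13 by norm_num,
      Nat.factorization_mul (by norm_num) (by norm_num)]
    rw [Nat.Prime.factorization (by norm_num), Nat.Prime.factorization (by norm_num)]
    norm_num [Finsupp.single_apply]
  have indexH : (H : Subgroup G).index = 13 := by
    have := Subgroup.card_mul_index (H : Subgroup G)
    rw [cardH, hcard] at this; omega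
  obtain ⟨Q⟩ : Nonempty (Sylow 13 G) := inferInstance
  have cardQ : Nat.card (Q : Subgroup G) = 13 := by
    rw [Sylow.card_eq_multiplicity, hcard]
    rw [show (39:ℕ) = 3 * 13 by norm_num,
      Nat.factorization_mul (by norm_num) (by norm_num)]
    rw [Nat.Prime.factorization (by norm_num), Nat.Prime.factorization (by norm_num)]
    norm_num [Finsupp.single_apply]
  have indexQ : (Q : Subgroup G).index = 3 := by
    have := Subgroup.card_mul_index (Q : Subgroup G)
    rw [cardQ, hcard] at this; omega
  have nQ : (Q : Subgroup G).Normal := by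
    have h1 : Nat.card (Sylow 13 G) ∣ 3 := indexQ ▸ Sylow.card_dvd_index Q
    have h2 : Nat.card (Sylow 13 G) % 13 = 1 % 13 := card_sylow_modEq_one 13 G
    have hpos : 0 < Nat.card (Sylow 13 G) := Nat.card_pos
    have hle : Nat.card (Sylow 13 G) ≤ 3 := Nat.le_of_dvd (by norm_num) h1
    have hone : Nat.card (Sylow 13 G) = 1 := by interval_cases (Nat.card (Sylow 13 G)) <;> omega
    haveI : Subsingleton (Sylow 13 G) := (Nat.card_eq_one_iff_unique.mp hone).1
    rw [← Subgroup.normalizer_eq_top_iff, Subgroup.eq_top_iff']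
    intro g
    exact Sylow.smul_eq_iff_mem_normalizer.mp (Subsingleton.elim _ _)
  -- H is not normal
  have HnotNormal : ¬ (H : Subgroup G).Normal := by
    intro hN
    obtain ⟨x, hx⟩ := exists_prime_orderOf_dvd_card' (G := (H : Subgroup G)) 3 (by rw [cardH])
    obtain ⟨y, hy⟩ := exists_prime_orderOf_dvd_card' (G := (Q : Subgroup G)) 13 (by rw [cardQ])
    have hx' : orderOf (x : G) = 3 :=
      (orderOf_injective _ (Subgroup.subtype_injective _) x).trans hx
    have hy' : orderOf (y : G) = 13 :=
      (orderOf_injective _ (Subgroup.subtype_injective _) y).trans hy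
    have hdisj : (H : Subgroup G) ⊓ Q = ⊥ := by
      refine Subgroup.card_eq_one.mp ?_
      have d1 := Subgroup.card_dvd_of_le (inf_le_left : (H : Subgroup G) ⊓ Q ≤ H)
      have d2 := Subgroup.card_dvd_of_le (inf_le_right : (H : Subgroup G) ⊓ Q ≤ Q)
      rw [cardH] at d1
      rw [cardQ] at d2
      have := Nat.dvd_gcd d1 d2
      norm_num at this
      exact this
    have hcomm : Commute (x : G) (y : G) :=
      Subgroup.commute_of_normal_of_disjoint _ _ hN nQ (disjoint_iff.mpr hdisj) _ _ x.2 y.2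
    have horder : orderOf ((x : G) * y) = 39 := by
      rw [hcomm.orderOf_mul_eq_mul_orderOf_of_coprime (by rw [hx', hy']; decide), hx', hy']
    have : IsCyclic G := isCyclic_of_orderOf_eq_card _ (by rw [horder, hcard])
    exact hnab fun a b => (IsCyclic.commGroup (α := G)).mul_comm a b
  -- generators
  obtain ⟨xH, hxH⟩ := exists_prime_orderOf_dvd_card' (G := (H : Subgroup G)) 3 (by rw [cardH])
  have hx : orderOf ((xH : G)) = 3 :=
    (orderOf_injective _ (Subgroup.subtype_injective _) xH).trans hxH
  haveI : IsCyclic (Q : Subgroup G) := isCyclic_of_prime_card cardQ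
  obtain ⟨g, hg⟩ := IsCyclic.exists_generator (α := (Q : Subgroup G))
  have hQz : Subgroup.zpowers (g : G) = Q := by
    apply Subgroup.eq_of_le_of_card_ge (Subgroup.zpowers_le.mpr g.2)
    have hog : orderOf (g : G) = 13 :=
      (orderOf_injective ((Q : Subgroup G)).subtype (Subgroup.subtype_injective _) g).trans
        ((orderOf_eq_card_of_forall_mem_zpowers hg).trans cardQ)
    rw [Nat.card_zpowers, hog, cardQ]
  have htop : (Q : Subgroup G) ⊔ Subgroup.zpowers (xH : G) = ⊤ := by
    apply Subgroup.eq_top_of_card_eq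
    have hdvd39 := Subgroup.card_subgroup_dvd_card ((Q : Subgroup G) ⊔ Subgroup.zpowers (xH : G))
    rw [hcard] at hdvd39
    have h13 := Subgroup.card_dvd_of_le (le_sup_left : (Q : Subgroup G) ≤ _ ⊔ Subgroup.zpowers (xH : G))
    rw [cardQ] at h13
    have h3 : 3 ∣ Nat.card ((Q : Subgroup G) ⊔ Subgroup.zpowers (xH : G) :) := by
      have := Subgroup.card_dvd_of_le
        (le_sup_right : Subgroup.zpowers (xH : G) ≤ (Q : Subgroup G) ⊔ _)
      rwa [Nat.card_zpowers, hx] at this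
    rw [hcard]
    exact Nat.dvd_antisymm hdvd39
      (Nat.Coprime.mul_dvd_of_dvd_of_dvd (by norm_num) h13 h3)
  have hsupG : IsSupersoluble G := by
    refine ⟨2, ![⊥, Q, ⊤], ?_, rfl, rfl, ?_, ?_⟩
    · intro i j hij
      fin_cases i <;> fin_cases j <;>
        first
          | exact le_rfl
          | exact bot_le
          | exact le_top
          | exact absurd hij (by decide)
    · intro i
      fin_cases i
      · exact inferInstanceAs (⊥ : Subgroup G).Normal
      · exact nQ
      · exact inferInstanceAs (⊤ : Subgroup G).Normal
    · intro i
      fin_cases i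
      · exact ⟨(g : G), by
          show (Q : Subgroup G) = ⊥ ⊔ Subgroup.zpowers (g : G)
          rw [bot_sup_eq, hQz]⟩
      · exact ⟨(xH : G), by
          show (⊤ : Subgroup G) = (Q : Subgroup G) ⊔ Subgroup.zpowers (xH : G)
          rw [htop]⟩
  have hmemG : MemUt 1 G := by
    refine ⟨hsupG, fun p hp hdvd => ?_⟩
    have hd : Monoid.exponent G ∣ 39 := hcard ▸ Group.exponent_dvd_nat_card
    have h2 : p * p ∣ 39 := by
      have := hdvd.trans hd; rwa [pow_two] at this
    have hp2 : p ≤ 6 := by nlinarith [Nat.le_of_dvd (by norm_num : (0:ℕ) < 39) h2]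
    have := hp.two_le
    interval_cases p <;> omega
  constructor
  · -- UtSubnormal
    have hresid : UtResidual 1 (↥(⊤ : Subgroup G)) ≤ ⊥ := by
      apply sInf_le
      exact ⟨inferInstance,
        memUt_of_mulEquiv
          ((Subgroup.topEquiv (G := G)).symm.trans
            (QuotientGroup.quotientBot (G := (⊤ : Subgroup G))).symm) hmemG⟩
    refine Relation.ReflTransGen.single ⟨le_top, ?_⟩
    exact (Subgroup.map_mono hresid).trans (by rw [Subgroup.map_bot]; exact bot_le)
  · -- not KPtSubnormal
    intro hchain
    have hTopNe : (⊤ : Subgroup G) ≠ (H : Subgroup G) := by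
      intro h
      rw [← h, Subgroup.card_top, hcard] at cardH
      omega
    have key : ∀ K : Subgroup G,
        Relation.ReflTransGen (KPtStep 1) K ⊤ → K = (H : Subgroup G) → False := by
      intro K hc
      induction hc using Relation.ReflTransGen.head_induction_on with
      | refl => exact fun h => hTopNe h
      | head hstep hc ih =>
        rename_i A C
        intro hKH
        subst hKH
        have hle : (H : Subgroup G) ≤ C := hstep.1
        have hCd := Subgroup.card_subgroup_dvd_card C
        rw [hcard] at hCd
        have h3C := Subgroup.card_dvd_of_le hle
        rw [cardH] at h3C
        have hdivmem : Nat.card C ∈ Nat.divisors 39 :=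
          Nat.mem_divisors.mpr ⟨hCd, by norm_num⟩
        rw [show Nat.divisors 39 = {1, 3, 13, 39} from by decide] at hdivmem
        simp only [Finset.mem_insert, Finset.mem_singleton] at hdivmem
        have hC339 : Nat.card C = 3 ∨ Nat.card C = 39 := by omega
        rcases hC339 with h3 | h39
        · exact ih (Subgroup.eq_of_le_of_card_ge hle (by omega)).symm
        · have hCtop : C = ⊤ := Subgroup.eq_top_of_card_eq C (by rw [h39, hcard])
          subst hCtop
          rcases hstep.2 with hnorm | ⟨p, hp, hrel, hq⟩
          · -- H normal in ⊤ implies H normal in G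
            apply HnotNormal
            constructor
            intro n hn gg
            have := hnorm.conj_mem ⟨n, Subgroup.mem_top n⟩
              (Subgroup.mem_subgroupOf.mpr hn) ⟨gg, Subgroup.mem_top gg⟩
            exact Subgroup.mem_subgroupOf.mp this
          · rw [Subgroup.relIndex_top_right, indexH] at hrel
            subst hrel
            exact hq 2 (by norm_num) (by norm_num)
    exact key _ hchain rfl
end
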